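/- arXiv:1907.06624 — 6 statements merged into one kernel-verified Lean document; each statement's English description precedes it below -/
import Mathlib

section
/- For all smooth H, F : ℝⁿ × ℝⁿ → ℝ and every smooth Ψ : ℝⁿ × ℝⁿ → ℂ, the covariant Liouvillian operators satisfy the commutator identity L̂_H(L̂_F Ψ) − L̂_F(L̂_H Ψ) = iħ L̂_{{H,F}} Ψ. -/
open Complex

noncomputable section

/-- Classical phase space `T*Q = ℝⁿ × ℝⁿ` with coordinates `z = (q, p)`. -/
abbrev PS (n : ℕ) := (Fin n → ℝ) × (Fin n → ℝ)

variable {n : ℕ}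

/-- Partial derivative `∂f/∂qⁱ` of a complex-valued function on phase space. -/
noncomputable def dq (i : Fin n) (f : PS n → ℂ) (z : PS n) : ℂ :=
  fderiv ℝ f z (Pi.single i 1, 0)

/-- Partial derivative `∂f/∂pᵢ` of a complex-valued function on phase space. -/
noncomputable def dp (i : Fin n) (f : PS n → ℂ) (z : PS n) : ℂ :=
  fderiv ℝ f z (0, Pi.single i 1)

/-- Partial derivative `∂f/∂qⁱ` of a real-valued function on phase space. -/
noncomputable def dqR (i : Fin n) (f : PS n → ℝ) (z : PS n) : ℝ :=
  fderiv ℝ f z (Pi.single i 1, 0)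

/-- Partial derivative `∂f/∂pᵢ` of a real-valued function on phase space. -/
noncomputable def dpR (i : Fin n) (f : PS n → ℝ) (z : PS n) : ℝ :=
  fderiv ℝ f z (0, Pi.single i 1)

/-- Canonical Poisson bracket `{F,G} = Σᵢ (∂F/∂qⁱ ∂G/∂pᵢ − ∂F/∂pᵢ ∂G/∂qⁱ)`,
extended ℂ-bilinearly to complex-valued functions. -/
noncomputable def pb (F G : PS n → ℂ) (z : PS n) : ℂ :=
  ∑ i, (dq i F z * dp i G z - dp i F z * dq i G z)

/-- Canonical Poisson bracket of real-valued functions. -/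
noncomputable def pbR (F G : PS n → ℝ) (z : PS n) : ℝ :=
  ∑ i, (dqR i F z * dpR i G z - dpR i F z * dqR i G z)

/-- The covariant Liouvillian (prequantum operator)
`L̂_H Ψ := iℏ {H, Ψ} − (Σᵢ pᵢ ∂H/∂pᵢ − H) Ψ`. -/
noncomputable def Liouv (ℏ : ℝ) (H : PS n → ℝ) (Ψ : PS n → ℂ) (z : PS n) : ℂ :=
  Complex.I * ℏ * pb (fun w => (H w : ℂ)) Ψ z
    - (((∑ i, z.2 i * dpR i H z) - H z : ℝ) : ℂ) * Ψ z


namespace LiouvAux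

open Finset


lemma t1 : ((⊤:ℕ∞): WithTop ℕ∞) + 1 ≤ ((⊤:ℕ∞): WithTop ℕ∞) := by exact_mod_cast le_top
lemma t2 : (2: WithTop ℕ∞) ≤ ((⊤:ℕ∞): WithTop ℕ∞) := WithTop.coe_le_coe.mpr le_top
lemma t3 : (1: WithTop ℕ∞) ≤ ((⊤:ℕ∞): WithTop ℕ∞) := WithTop.coe_le_coe.mpr le_top

/-- shorthand for smooth -/
abbrev Sm (f : PS n → ℂ) : Prop := ContDiff ℝ (⊤:ℕ∞) f

lemma dAt {f : PS n → ℂ} (hf : Sm f) (z : PS n) : DifferentiableAt ℝ f z :=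
  (hf.differentiable (by simp)).differentiableAt

lemma dAtR {f : PS n → ℝ} (hf : ContDiff ℝ (⊤:ℕ∞) f) (z : PS n) : DifferentiableAt ℝ f z :=
  (hf.differentiable (by simp)).differentiableAt

def vq (i : Fin n) : PS n := ((Pi.single i 1 : Fin n → ℝ), 0)
def vp (i : Fin n) : PS n := (0, (Pi.single i 1 : Fin n → ℝ))

lemma dq_eq (i : Fin n) (f : PS n → ℂ) (z : PS n) : dq i f z = fderiv ℝ f z (vq i) := rfl
lemma dp_eq (i : Fin n) (f : PS n → ℂ) (z : PS n) : dp i f z = fderiv ℝ f z (vp i) := rfl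
lemma dqR_eq (i : Fin n) (f : PS n → ℝ) (z : PS n) : dqR i f z = fderiv ℝ f z (vq i) := rfl
lemma dpR_eq (i : Fin n) (f : PS n → ℝ) (z : PS n) : dpR i f z = fderiv ℝ f z (vp i) := rfl

/-- second derivative bilinear form -/
noncomputable def fd2 (u : PS n → ℂ) (v w : PS n) (z : PS n) : ℂ := fderiv ℝ (fderiv ℝ u) z v w

lemma contDiff_fapp {f : PS n → ℂ} (hf : Sm f) (v : PS n) :
    Sm (fun z => fderiv ℝ f z v) :=
  (hf.fderiv_right t1).clm_apply contDiff_const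

lemma contDiff_dq {f : PS n → ℂ} (hf : Sm f) (i : Fin n) : Sm (dq i f) :=
  contDiff_fapp hf (vq i)

lemma contDiff_dp {f : PS n → ℂ} (hf : Sm f) (i : Fin n) : Sm (dp i f) :=
  contDiff_fapp hf (vp i)

lemma contDiff_fappR {f : PS n → ℝ} (hf : ContDiff ℝ (⊤:ℕ∞) f) (v : PS n) :
    ContDiff ℝ (⊤:ℕ∞) (fun z => fderiv ℝ f z v) :=
  (hf.fderiv_right t1).clm_apply contDiff_const

lemma fapp2 {f : PS n → ℂ} (hf : Sm f) (z v w : PS n) :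
    fderiv ℝ (fun y => fderiv ℝ f y w) z v = fd2 f v w z := by
  rw [fderiv_clm_apply (((hf.fderiv_right t1).differentiable (by simp)).differentiableAt)
    (differentiableAt_const w)]
  simp [fd2]

lemma fd2_symm {f : PS n → ℂ} (hf : Sm f) (v w z : PS n) : fd2 f v w z = fd2 f w v z :=
  (hf.contDiffAt.isSymmSndFDerivAt (by rw [minSmoothness_of_isRCLikeNormedField]; exact t2)).eq v w

section ptwise
variable {f g : PS n → ℂ} {z v : PS n}

lemma fd_mul (hf : DifferentiableAt ℝ f z) (hg : DifferentiableAt ℝ g z) (v : PS n) :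
    fderiv ℝ (fun w => f w * g w) z v = fderiv ℝ f z v * g z + f z * fderiv ℝ g z v := by
  rw [fderiv_fun_mul hf hg]
  simp [smul_eq_mul]
  ring

lemma fd_sub (hf : DifferentiableAt ℝ f z) (hg : DifferentiableAt ℝ g z) (v : PS n) :
    fderiv ℝ (fun w => f w - g w) z v = fderiv ℝ f z v - fderiv ℝ g z v := by
  rw [fderiv_fun_sub hf hg]; rfl

lemma fd_const_mul (hf : DifferentiableAt ℝ f z) (c : ℂ) (v : PS n) :
    fderiv ℝ (fun w => c * f w) z v = c * fderiv ℝ f z v := by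
  rw [fderiv_const_mul hf]; simp

lemma fd_sum {ι : Type*} (s : Finset ι) (F : ι → PS n → ℂ) (z : PS n)
    (h : ∀ i ∈ s, DifferentiableAt ℝ (F i) z) (v : PS n) :
    fderiv ℝ (fun w => ∑ i ∈ s, F i w) z v = ∑ i ∈ s, fderiv ℝ (F i) z v := by
  rw [fderiv_fun_sum h]; simp

end ptwise

/-- complex coordinate function pⱼ -/
noncomputable def Pc (j : Fin n) (z : PS n) : ℂ := (z.2 j : ℂ)

lemma Pc_clm (j : Fin n) : (Pc j : PS n → ℂ) =
    (Complex.ofRealCLM.comp ((ContinuousLinearMap.proj j).comp (ContinuousLinearMap.snd ℝ _ _))) := rfl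

lemma contDiff_Pc (j : Fin n) : Sm (Pc (n := n) j) := by
  rw [Pc_clm]; exact (ContinuousLinearMap.contDiff _)

lemma fd_Pc (j : Fin n) (z v : PS n) : fderiv ℝ (Pc j) z v = (v.2 j : ℂ) := by
  rw [Pc_clm, ContinuousLinearMap.fderiv]; rfl

/-- real-to-complex lift -/
noncomputable def cx (H : PS n → ℝ) : PS n → ℂ := fun w => (H w : ℂ)

lemma contDiff_cx {H : PS n → ℝ} (hH : ContDiff ℝ (⊤:ℕ∞) H) : Sm (cx H) :=
  Complex.ofRealCLM.contDiff.comp hH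

lemma fd_cx {H : PS n → ℝ} {z : PS n} (hH : DifferentiableAt ℝ H z) (v : PS n) :
    fderiv ℝ (cx H) z v = (fderiv ℝ H z v : ℂ) := by
  have := (Complex.ofRealCLM.hasFDerivAt.comp z hH.hasFDerivAt).fderiv
  rw [show (cx H) = Complex.ofRealCLM ∘ H from rfl, this]; rfl

lemma dp_cx {H : PS n → ℝ} {z : PS n} (hH : DifferentiableAt ℝ H z) (i : Fin n) :
    dp i (cx H) z = (dpR i H z : ℂ) := fd_cx hH _

lemma dq_cx {H : PS n → ℝ} {z : PS n} (hH : DifferentiableAt ℝ H z) (i : Fin n) :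
    dq i (cx H) z = (dqR i H z : ℂ) := fd_cx hH _

/-- the "energy" factor as a complex function -/
noncomputable def eC (f : PS n → ℂ) (z : PS n) : ℂ := (∑ j, Pc j z * dp j f z) - f z

lemma contDiff_pb {f g : PS n → ℂ} (hf : Sm f) (hg : Sm g) : Sm (pb f g) := by
  have : pb f g = fun z => ∑ i, (dq i f z * dp i g z - dp i f z * dq i g z) := rfl
  rw [this]
  exact ContDiff.sum fun i _ =>
    ((contDiff_dq hf i).mul (contDiff_dp hg i)).sub ((contDiff_dp hf i).mul (contDiff_dq hg i))

lemma contDiff_eC {f : PS n → ℂ} (hf : Sm f) : Sm (eC f) := by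
  have : eC f = fun z => (∑ j, Pc j z * dp j f z) - f z := rfl
  rw [this]
  exact (ContDiff.sum fun j _ => (contDiff_Pc j).mul (contDiff_dp hf j)).sub hf

lemma sum_antisym {E : Fin n → Fin n → ℂ} (h : ∀ i j, E i j = - E j i) :
    ∑ i, ∑ j, E i j = 0 := by
  have h1 : ∑ i, ∑ j, E i j = ∑ j, ∑ i, E i j := Finset.sum_comm
  have h2 : ∑ j, ∑ i, E i j = -∑ i, ∑ j, E i j := by
    rw [← Finset.sum_neg_distrib]
    refine Finset.sum_congr rfl fun i _ => ?_
    rw [← Finset.sum_neg_distrib]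
    exact Finset.sum_congr rfl fun j _ => h j i
  have := h1.trans h2
  have h3 : (2:ℂ) * ∑ i, ∑ j, E i j = 0 := by linear_combination this
  simpa using h3

-- delta symbol
noncomputable def dlt (i j : Fin n) : ℂ := if i = j then 1 else 0

lemma dlt_symm (i j : Fin n) : dlt i j = dlt j i := by
  simp [dlt, eq_comm]

lemma sum_dlt_mul (i : Fin n) (c : Fin n → ℂ) : ∑ j, dlt i j * c j = c i := by
  simp [dlt, ite_mul]

lemma fd_dq {f : PS n → ℂ} (hf : Sm f) (i : Fin n) (z v : PS n) :
    fderiv ℝ (dq i f) z v = fd2 f v (vq i) z := fapp2 hf z v (vq i)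

lemma fd_dp {f : PS n → ℂ} (hf : Sm f) (i : Fin n) (z v : PS n) :
    fderiv ℝ (dp i f) z v = fd2 f v (vp i) z := fapp2 hf z v (vp i)

lemma fd_pb {f g : PS n → ℂ} (hf : Sm f) (hg : Sm g) (z v : PS n) :
    fderiv ℝ (pb f g) z v = ∑ j, (fd2 f v (vq j) z * dp j g z + dq j f z * fd2 g v (vp j) z
      - fd2 f v (vp j) z * dq j g z - dp j f z * fd2 g v (vq j) z) := by
  have h1 : pb f g = fun w => ∑ j, (dq j f w * dp j g w - dp j f w * dq j g w) := rfl
  have d1 : ∀ j : Fin n, DifferentiableAt ℝ (fun w => dq j f w * dp j g w) z := fun j =>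
    dAt ((contDiff_dq hf j).mul (contDiff_dp hg j)) z
  have d2 : ∀ j : Fin n, DifferentiableAt ℝ (fun w => dp j f w * dq j g w) z := fun j =>
    dAt ((contDiff_dp hf j).mul (contDiff_dq hg j)) z
  rw [h1, fd_sum _ _ z (fun j _ => (d1 j).fun_sub (d2 j)) v]
  refine Finset.sum_congr rfl fun j _ => ?_
  rw [fd_sub (d1 j) (d2 j),
    fd_mul (dAt (contDiff_dq hf j) z) (dAt (contDiff_dp hg j) z),
    fd_mul (dAt (contDiff_dp hf j) z) (dAt (contDiff_dq hg j) z),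
    fd_dq hf, fd_dp hg, fd_dp hf, fd_dq hg]
  ring

lemma dp_pb {f g : PS n → ℂ} (hf : Sm f) (hg : Sm g) (i : Fin n) (z : PS n) :
    dp i (pb f g) z = ∑ j, (fd2 f (vp i) (vq j) z * dp j g z + dq j f z * fd2 g (vp i) (vp j) z
      - fd2 f (vp i) (vp j) z * dq j g z - dp j f z * fd2 g (vp i) (vq j) z) := by
  rw [dp_eq, fd_pb hf hg]

lemma dq_pb {f g : PS n → ℂ} (hf : Sm f) (hg : Sm g) (i : Fin n) (z : PS n) :
    dq i (pb f g) z = ∑ j, (fd2 f (vq i) (vq j) z * dp j g z + dq j f z * fd2 g (vq i) (vp j) z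
      - fd2 f (vq i) (vp j) z * dq j g z - dp j f z * fd2 g (vq i) (vq j) z) := by
  rw [dq_eq, fd_pb hf hg]

lemma fd_eC {f : PS n → ℂ} (hf : Sm f) (z v : PS n) :
    fderiv ℝ (eC f) z v
      = (∑ j, (((v.2 j : ℝ) : ℂ) * dp j f z + Pc j z * fd2 f v (vp j) z)) - fderiv ℝ f z v := by
  have h1 : eC f = fun w => (∑ j, Pc j w * dp j f w) - f w := rfl
  have d1 : ∀ j : Fin n, DifferentiableAt ℝ (fun w => Pc j w * dp j f w) z := fun j =>
    dAt ((contDiff_Pc j).mul (contDiff_dp hf j)) z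
  have ds : DifferentiableAt ℝ (fun w => ∑ j, Pc j w * dp j f w) z :=
    dAt (ContDiff.sum fun j _ => (contDiff_Pc j).mul (contDiff_dp hf j)) z
  rw [h1, fd_sub ds (dAt hf z), fd_sum _ _ z (fun j _ => d1 j) v]
  congr 1
  refine Finset.sum_congr rfl fun j _ => ?_
  rw [fd_mul (dAt (contDiff_Pc j) z) (dAt (contDiff_dp hf j) z), fd_Pc, fd_dp hf]

lemma dp_eC {f : PS n → ℂ} (hf : Sm f) (i : Fin n) (z : PS n) :
    dp i (eC f) z = ∑ j, Pc j z * fd2 f (vp i) (vp j) z := by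
  rw [dp_eq, fd_eC hf, Finset.sum_add_distrib]
  have h1 : ∑ j, (((vp (n := n) i).2 j : ℝ) : ℂ) * dp j f z = dp i f z := by
    simp [vp, Pi.single_apply, apply_ite (Complex.ofReal), ite_mul]
  rw [h1, ← dp_eq]
  ring

lemma dq_eC {f : PS n → ℂ} (hf : Sm f) (i : Fin n) (z : PS n) :
    dq i (eC f) z = ∑ j, (Pc j z * fd2 f (vq i) (vp j) z - dlt i j * dq j f z) := by
  rw [dq_eq, fd_eC hf, Finset.sum_sub_distrib]
  have h1 : ∑ j, (((vq (n := n) i).2 j : ℝ) : ℂ) * dp j f z = 0 := by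
    simp [vq]
  have h2 : ∑ j, dlt i j * dq j f z = dq i f z := sum_dlt_mul i _
  rw [h2, Finset.sum_add_distrib, h1, ← dq_eq]
  ring

lemma pb_dd (h f : PS n → ℂ) (z : PS n) :
    pb h f z = ∑ i, ∑ j, dlt i j * (dq i h z * dp j f z - dp i h z * dq j f z) := by
  rw [pb]
  exact Finset.sum_congr rfl fun i _ =>
    (sum_dlt_mul i (fun j => dq i h z * dp j f z - dp i h z * dq j f z)).symm

section pbalg
variable {h a b : PS n → ℂ} {z : PS n}

lemma pb_sub (ha : DifferentiableAt ℝ a z) (hb : DifferentiableAt ℝ b z) :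
    pb h (fun w => a w - b w) z = pb h a z - pb h b z := by
  simp only [pb, dq_eq, dp_eq, fd_sub ha hb, ← Finset.sum_sub_distrib]
  exact Finset.sum_congr rfl fun i _ => by ring

lemma pb_const_mul (ha : DifferentiableAt ℝ a z) (c : ℂ) :
    pb h (fun w => c * a w) z = c * pb h a z := by
  simp only [pb, dq_eq, dp_eq, fd_const_mul ha c, Finset.mul_sum]
  exact Finset.sum_congr rfl fun i _ => by ring

lemma pb_mul (ha : DifferentiableAt ℝ a z) (hb : DifferentiableAt ℝ b z) :
    pb h (fun w => a w * b w) z = pb h a z * b z + a z * pb h b z := by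
  simp only [pb, dq_eq, dp_eq, fd_mul ha hb, Finset.sum_mul, Finset.mul_sum,
    ← Finset.sum_add_distrib]
  exact Finset.sum_congr rfl fun i _ => by ring

end pbalg
lemma jacobi {h f g : PS n → ℂ} (hh : Sm h) (hf : Sm f) (hg : Sm g) (z : PS n) :
    pb h (pb f g) z - pb f (pb h g) z = pb (pb h f) g z := by
  rw [← sub_eq_zero]
  simp only [pb]
  simp only [dp_pb hf hg, dq_pb hf hg, dp_pb hh hg, dq_pb hh hg, dp_pb hh hf, dq_pb hh hf]
  simp only [Finset.mul_sum, Finset.sum_mul, ← Finset.sum_sub_distrib]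
  refine sum_antisym fun i j => ?_
  simp only [fd2_symm hh (vq j) (vq i), fd2_symm hh (vq j) (vp i),
    fd2_symm hh (vp j) (vq i), fd2_symm hh (vp j) (vp i),
    fd2_symm hf (vq j) (vq i), fd2_symm hf (vq j) (vp i),
    fd2_symm hf (vp j) (vq i), fd2_symm hf (vp j) (vp i),
    fd2_symm hg (vq j) (vq i), fd2_symm hg (vq j) (vp i),
    fd2_symm hg (vp j) (vq i), fd2_symm hg (vp j) (vp i)]
  ring

lemma e_bracket {h f : PS n → ℂ} (hh : Sm h) (hf : Sm f) (z : PS n) :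
    pb h (eC f) z - pb f (eC h) z = eC (pb h f) z := by
  rw [← sub_eq_zero]
  simp only [eC]
  rw [pb_dd h f z]
  simp only [pb]
  simp only [dp_eC hf, dq_eC hf, dp_eC hh, dq_eC hh, dp_pb hh hf]
  simp only [Finset.mul_sum, Finset.sum_mul, mul_sub, sub_mul, ← Finset.sum_sub_distrib]
  refine sum_antisym fun i j => ?_
  simp only [fd2_symm hh (vq j) (vq i), fd2_symm hh (vq j) (vp i),
    fd2_symm hh (vp j) (vq i), fd2_symm hh (vp j) (vp i),
    fd2_symm hf (vq j) (vq i), fd2_symm hf (vq j) (vp i),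
    fd2_symm hf (vp j) (vq i), fd2_symm hf (vp j) (vp i),
    dlt_symm j i]
  ring
lemma contDiff_pbR {H F : PS n → ℝ} (hH : ContDiff ℝ (⊤:ℕ∞) H) (hF : ContDiff ℝ (⊤:ℕ∞) F) :
    ContDiff ℝ (⊤:ℕ∞) (pbR H F) := by
  have h1 : pbR H F = fun z => ∑ i, (dqR i H z * dpR i F z - dpR i H z * dqR i F z) := rfl
  rw [h1]
  refine ContDiff.sum fun i _ => ContDiff.sub (ContDiff.mul ?_ ?_) (ContDiff.mul ?_ ?_)
  · exact contDiff_fappR hH (vq i)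
  · exact contDiff_fappR hF (vp i)
  · exact contDiff_fappR hH (vp i)
  · exact contDiff_fappR hF (vq i)

lemma cx_pbR {H F : PS n → ℝ} (hH : ContDiff ℝ (⊤:ℕ∞) H) (hF : ContDiff ℝ (⊤:ℕ∞) F) :
    cx (pbR H F) = pb (cx H) (cx F) := by
  funext z
  have h1 : cx (pbR H F) z = ((pbR H F z : ℝ) : ℂ) := rfl
  rw [h1, pbR, pb]
  push_cast
  refine Finset.sum_congr rfl fun i _ => ?_
  rw [dq_cx (dAtR hH z), dp_cx (dAtR hF z), dp_cx (dAtR hH z), dq_cx (dAtR hF z)]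

lemma Liouv_eC {H : PS n → ℝ} (hH : ContDiff ℝ (⊤:ℕ∞) H) (ℏ : ℝ) (Ψ : PS n → ℂ) :
    Liouv ℏ H Ψ = fun z => Complex.I * ℏ * pb (cx H) Ψ z - eC (cx H) z * Ψ z := by
  funext z
  have key : (((∑ i, z.2 i * dpR i H z) - H z : ℝ) : ℂ) = eC (cx H) z := by
    rw [eC]
    push_cast
    congr 1
    exact Finset.sum_congr rfl fun j _ => by rw [dp_cx (dAtR hH z) j]; rfl
  rw [Liouv, key]
  rfl

lemma Lc_comm (ℏ : ℝ) {h f Ψ : PS n → ℂ} (hh : Sm h) (hf : Sm f) (hΨ : Sm Ψ) (z : PS n) :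
    (Complex.I * ℏ * pb h (fun w => Complex.I * ℏ * pb f Ψ w - eC f w * Ψ w) z
        - eC h z * (Complex.I * ℏ * pb f Ψ z - eC f z * Ψ z))
      - (Complex.I * ℏ * pb f (fun w => Complex.I * ℏ * pb h Ψ w - eC h w * Ψ w) z
        - eC f z * (Complex.I * ℏ * pb h Ψ z - eC h z * Ψ z))
      = Complex.I * ℏ * (Complex.I * ℏ * pb (pb h f) Ψ z - eC (pb h f) z * Ψ z) := by
  rw [pb_sub (dAt (contDiff_const.mul (contDiff_pb hf hΨ)) z) (dAt ((contDiff_eC hf).mul hΨ) z),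
      pb_const_mul (dAt (contDiff_pb hf hΨ) z),
      pb_mul (dAt (contDiff_eC hf) z) (dAt hΨ z),
      pb_sub (dAt (contDiff_const.mul (contDiff_pb hh hΨ)) z) (dAt ((contDiff_eC hh).mul hΨ) z),
      pb_const_mul (dAt (contDiff_pb hh hΨ) z),
      pb_mul (dAt (contDiff_eC hh) z) (dAt hΨ z)]
  have J := jacobi hh hf hΨ z
  have E := e_bracket hh hf z
  linear_combination (Complex.I*(ℏ:ℂ))*(Complex.I*(ℏ:ℂ))*J - Complex.I*(ℏ:ℂ)*(Ψ z)*E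

end LiouvAux

/-- Commutator identity for covariant Liouvillians:
`[L̂_H, L̂_F] Ψ = iℏ L̂_{{H,F}} Ψ`. -/
theorem liouvillian_commutator (n : ℕ) (ℏ : ℝ) (hℏ : 0 < ℏ)
    (H F : PS n → ℝ) (hH : ContDiff ℝ (⊤ : ℕ∞) H) (hF : ContDiff ℝ (⊤ : ℕ∞) F)
    (Ψ : PS n → ℂ) (hΨ : ContDiff ℝ (⊤ : ℕ∞) Ψ) :
    ∀ z, Liouv ℏ H (Liouv ℏ F Ψ) z - Liouv ℏ F (Liouv ℏ H Ψ) z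
      = Complex.I * ℏ * Liouv ℏ (pbR H F) Ψ z := by
  intro z
  have hh := LiouvAux.contDiff_cx hH
  have hf := LiouvAux.contDiff_cx hF
  simp only [LiouvAux.Liouv_eC hF ℏ, LiouvAux.Liouv_eC hH ℏ,
    LiouvAux.Liouv_eC (LiouvAux.contDiff_pbR hH hF) ℏ, LiouvAux.cx_pbR hH hF]
  exact LiouvAux.Lc_comm ℏ hh hf hΨ z
end
end

section
/- The covariant Liouvillian is symmetric (Hermitian) with respect to the L² inner product: for every smooth H : ℝⁿ × ℝⁿ → ℝ and all smooth compactly supported Ψ₁, Ψ₂ : ℝⁿ × ℝⁿ → ℂ, one has ∫_{ℝ²ⁿ} conj(Ψ₁(z)) · (L̂_H Ψ₂)(z) dz = ∫_{ℝ²ⁿ} conj((L̂_H Ψ₁)(z)) · Ψ₂(z) dz, where dz denotes the Lebesgue measure on ℝ²ⁿ. -/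
open Complex

noncomputable section

variable {n : ℕ}

open MeasureTheory

section Helpers

variable {n : ℕ}

instance instHaarPS (n : ℕ) :
    MeasureTheory.Measure.IsAddHaarMeasure (volume : MeasureTheory.Measure (PS n)) :=
  MeasureTheory.Measure.prod.instIsAddHaarMeasure _ _

lemma one_le_top : (1 : WithTop ℕ∞) ≤ ((⊤ : ℕ∞) : WithTop ℕ∞) := by
  exact_mod_cast (le_top : (1 : ℕ∞) ≤ ⊤)

lemma topsucc : ((⊤ : ℕ∞) : WithTop ℕ∞) + 1 ≤ ((⊤ : ℕ∞) : WithTop ℕ∞) := by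
  exact_mod_cast (le_top : (⊤ : ℕ∞) + 1 ≤ ⊤)

lemma contDiff_dvC {f : PS n → ℂ} (hf : ContDiff ℝ (⊤ : ℕ∞) f) (v : PS n) :
    ContDiff ℝ (⊤ : ℕ∞) (fun z => fderiv ℝ f z v) :=
  (hf.fderiv_right topsucc).clm_apply contDiff_const

lemma contDiff_dvR {f : PS n → ℝ} (hf : ContDiff ℝ (⊤ : ℕ∞) f) (v : PS n) :
    ContDiff ℝ (⊤ : ℕ∞) (fun z => fderiv ℝ f z v) :=
  (hf.fderiv_right topsucc).clm_apply contDiff_const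

lemma parts {f g : PS n → ℂ} (hf : ContDiff ℝ (⊤ : ℕ∞) f) (hg : ContDiff ℝ (⊤ : ℕ∞) g)
    (hcg : HasCompactSupport g) (v : PS n) :
    ∫ z : PS n, f z * fderiv ℝ g z v = - ∫ z : PS n, fderiv ℝ f z v * g z := by
  apply integral_mul_fderiv_eq_neg_fderiv_mul_of_integrable
  · exact ((contDiff_dvC hf v).continuous.mul hg.continuous).integrable_of_hasCompactSupport
      hcg.mul_left
  · exact (hf.continuous.mul (contDiff_dvC hg v).continuous).integrable_of_hasCompactSupport
      (hcg.fderiv_apply ℝ v).mul_left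
  · exact (hf.continuous.mul hg.continuous).integrable_of_hasCompactSupport hcg.mul_left
  · exact fun x _ => hf.differentiable (by simp) x
  · exact fun x _ => hg.differentiable (by simp) x

lemma fderiv_apply_const {G : PS n → (PS n →L[ℝ] ℂ)} {z : PS n} (hG : DifferentiableAt ℝ G z)
    (v u : PS n) : fderiv ℝ (fun w => G w v) z u = fderiv ℝ G z u v := by
  rw [(hG.hasFDerivAt.clm_apply (hasFDerivAt_const v z)).fderiv]
  simp

lemma mixed {f : PS n → ℂ} (hf : ContDiff ℝ (⊤ : ℕ∞) f) (z u v : PS n) :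
    fderiv ℝ (fun w => fderiv ℝ f w v) z u = fderiv ℝ (fun w => fderiv ℝ f w u) z v := by
  have hdf : Differentiable ℝ (fderiv ℝ f) := (hf.fderiv_right topsucc).differentiable (by simp)
  rw [fderiv_apply_const (hdf z) v u, fderiv_apply_const (hdf z) u v]
  exact second_derivative_symmetric (fun y => (hf.differentiable (by simp) y).hasFDerivAt)
    (hdf z).hasFDerivAt u v

lemma fderiv_comp_clm {E F G' : Type*} [NormedAddCommGroup E] [NormedSpace ℝ E]
    [NormedAddCommGroup F] [NormedSpace ℝ F] [NormedAddCommGroup G'] [NormedSpace ℝ G']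
    {f : E → F} {z : E} (hf : DifferentiableAt ℝ f z) (L : F →L[ℝ] G') :
    fderiv ℝ (fun w => L (f w)) z = L.comp (fderiv ℝ f z) :=
  (L.hasFDerivAt.comp z hf.hasFDerivAt).fderiv

lemma dq_conj {f : PS n → ℂ} (hf : Differentiable ℝ f) (i : Fin n) (z : PS n) :
    dq i (fun w => (starRingEnd ℂ) (f w)) z = (starRingEnd ℂ) (dq i f z) := by
  have h : (fun w => (starRingEnd ℂ) (f w))
      = fun w => (Complex.conjCLE : ℂ →L[ℝ] ℂ) (f w) := by ext w; simp
  rw [dq, h, fderiv_comp_clm (hf z) _]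
  simp [dq]

lemma dp_conj {f : PS n → ℂ} (hf : Differentiable ℝ f) (i : Fin n) (z : PS n) :
    dp i (fun w => (starRingEnd ℂ) (f w)) z = (starRingEnd ℂ) (dp i f z) := by
  have h : (fun w => (starRingEnd ℂ) (f w))
      = fun w => (Complex.conjCLE : ℂ →L[ℝ] ℂ) (f w) := by ext w; simp
  rw [dp, h, fderiv_comp_clm (hf z) _]
  simp [dp]

lemma dq_ofReal {f : PS n → ℝ} (hf : Differentiable ℝ f) (i : Fin n) (z : PS n) :
    dq i (fun w => ((f w : ℝ) : ℂ)) z = ((dqR i f z : ℝ) : ℂ) := by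
  rw [dq, dqR, show (fun w => ((f w : ℝ) : ℂ)) = fun w => Complex.ofRealCLM (f w) from rfl,
    fderiv_comp_clm (hf z) _]
  simp

lemma dp_ofReal {f : PS n → ℝ} (hf : Differentiable ℝ f) (i : Fin n) (z : PS n) :
    dp i (fun w => ((f w : ℝ) : ℂ)) z = ((dpR i f z : ℝ) : ℂ) := by
  rw [dp, dpR, show (fun w => ((f w : ℝ) : ℂ)) = fun w => Complex.ofRealCLM (f w) from rfl,
    fderiv_comp_clm (hf z) _]
  simp

lemma dq_mul {f g : PS n → ℂ} (hf : Differentiable ℝ f) (hg : Differentiable ℝ g)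
    (i : Fin n) (z : PS n) :
    dq i (fun w => f w * g w) z = dq i f z * g z + f z * dq i g z := by
  simp only [dq]
  rw [fderiv_fun_mul (hf z) (hg z)]
  simp [smul_eq_mul]
  ring

lemma dp_mul {f g : PS n → ℂ} (hf : Differentiable ℝ f) (hg : Differentiable ℝ g)
    (i : Fin n) (z : PS n) :
    dp i (fun w => f w * g w) z = dp i f z * g z + f z * dp i g z := by
  simp only [dp]
  rw [fderiv_fun_mul (hf z) (hg z)]
  simp [smul_eq_mul]
  ring

end Helpers


/-- The covariant Liouvillian is symmetric with respect to the
`L²` inner product on compactly supported smooth functions. -/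
theorem liouvillian_symmetric (n : ℕ) (ℏ : ℝ) (hℏ : 0 < ℏ)
    (H : PS n → ℝ) (hH : ContDiff ℝ (⊤ : ℕ∞) H)
    (Ψ₁ Ψ₂ : PS n → ℂ)
    (hΨ₁ : ContDiff ℝ (⊤ : ℕ∞) Ψ₁) (hΨ₂ : ContDiff ℝ (⊤ : ℕ∞) Ψ₂)
    (hc₁ : HasCompactSupport Ψ₁) (hc₂ : HasCompactSupport Ψ₂) :
    ∫ z : PS n, (starRingEnd ℂ) (Ψ₁ z) * Liouv ℏ H Ψ₂ z
      = ∫ z : PS n, (starRingEnd ℂ) (Liouv ℏ H Ψ₁ z) * Ψ₂ z := by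
  classical
  have hHc : ContDiff ℝ (⊤ : ℕ∞) (fun w : PS n => ((H w : ℝ) : ℂ)) :=
    Complex.ofRealCLM.contDiff.comp hH
  have hdH : Differentiable ℝ H := hH.differentiable (by simp)
  have hdΨ₁ : Differentiable ℝ Ψ₁ := hΨ₁.differentiable (by simp)
  have hdΨ₂ : Differentiable ℝ Ψ₂ := hΨ₂.differentiable (by simp)
  have hΨ₁c : ContDiff ℝ (⊤ : ℕ∞) (fun z : PS n => (starRingEnd ℂ) (Ψ₁ z)) := by
    have h : (fun z : PS n => (starRingEnd ℂ) (Ψ₁ z))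
        = fun z : PS n => (Complex.conjCLE : ℂ →L[ℝ] ℂ) (Ψ₁ z) := by ext w; simp
    rw [h]
    exact (Complex.conjCLE : ℂ →L[ℝ] ℂ).contDiff.comp hΨ₁
  have hdΨ₁c : Differentiable ℝ (fun z : PS n => (starRingEnd ℂ) (Ψ₁ z)) :=
    hΨ₁c.differentiable (by simp)
  have hΦ : ContDiff ℝ (⊤ : ℕ∞) (fun z : PS n => (starRingEnd ℂ) (Ψ₁ z) * Ψ₂ z) :=
    hΨ₁c.mul hΨ₂
  have hcΦ : HasCompactSupport (fun z : PS n => (starRingEnd ℂ) (Ψ₁ z) * Ψ₂ z) :=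
    hc₂.mul_left
  have intCC : ∀ (f g : PS n → ℂ), Continuous f → Continuous g → HasCompactSupport g →
      Integrable (fun z : PS n => f z * g z) := fun f g hf hg hcg =>
    (hf.mul hg).integrable_of_hasCompactSupport hcg.mul_left
  have hcontLiouv : ∀ (Ψ : PS n → ℂ), ContDiff ℝ (⊤ : ℕ∞) Ψ → Continuous (Liouv ℏ H Ψ) := by
    intro Ψ hΨ
    unfold Liouv pb dq dp dpR
    apply Continuous.sub
    · apply continuous_const.mul
      exact continuous_finset_sum _ fun i _ =>
        ((contDiff_dvC hHc _).continuous.mul (contDiff_dvC hΨ _).continuous).sub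
          ((contDiff_dvC hHc _).continuous.mul (contDiff_dvC hΨ _).continuous)
    · apply Continuous.mul ?_ hΨ.continuous
      apply Complex.continuous_ofReal.comp
      apply Continuous.sub ?_ hH.continuous
      exact continuous_finset_sum _ fun i _ =>
        ((continuous_apply i).comp continuous_snd).mul (contDiff_dvR hH _).continuous
  set Φ : PS n → ℂ := fun z : PS n => (starRingEnd ℂ) (Ψ₁ z) * Ψ₂ z with hΦdef
  -- the integral of the Poisson bracket of H with a compactly supported function vanishes
  have hzero : ∫ z : PS n, pb (fun w => ((H w : ℝ) : ℂ)) Φ z = 0 := by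
    simp only [pb, dq, dp]
    have hintterm : ∀ i : Fin n, Integrable (fun z : PS n =>
        fderiv ℝ (fun w : PS n => ((H w : ℝ) : ℂ)) z (Pi.single i 1, 0)
            * fderiv ℝ Φ z (0, Pi.single i 1)
          - fderiv ℝ (fun w : PS n => ((H w : ℝ) : ℂ)) z (0, Pi.single i 1)
            * fderiv ℝ Φ z (Pi.single i 1, 0)) := by
      intro i
      exact (intCC _ _ (contDiff_dvC hHc _).continuous (contDiff_dvC hΦ _).continuous
        (hcΦ.fderiv_apply ℝ _)).sub
        (intCC _ _ (contDiff_dvC hHc _).continuous (contDiff_dvC hΦ _).continuous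
          (hcΦ.fderiv_apply ℝ _))
    rw [integral_finset_sum _ (fun i _ => hintterm i)]
    apply Finset.sum_eq_zero
    intro i _
    have I1 : Integrable (fun z : PS n =>
        fderiv ℝ (fun w : PS n => ((H w : ℝ) : ℂ)) z (Pi.single i 1, 0)
          * fderiv ℝ Φ z (0, Pi.single i 1)) :=
      intCC _ _ (contDiff_dvC hHc _).continuous (contDiff_dvC hΦ _).continuous
        (hcΦ.fderiv_apply ℝ _)
    have I2 : Integrable (fun z : PS n =>
        fderiv ℝ (fun w : PS n => ((H w : ℝ) : ℂ)) z (0, Pi.single i 1)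
          * fderiv ℝ Φ z (Pi.single i 1, 0)) :=
      intCC _ _ (contDiff_dvC hHc _).continuous (contDiff_dvC hΦ _).continuous
        (hcΦ.fderiv_apply ℝ _)
    have e1 : ∫ z : PS n, fderiv ℝ (fun w : PS n => ((H w : ℝ) : ℂ)) z (Pi.single i 1, 0)
          * fderiv ℝ Φ z (0, Pi.single i 1)
        = - ∫ z : PS n, fderiv ℝ (fun w : PS n =>
            fderiv ℝ (fun w' : PS n => ((H w' : ℝ) : ℂ)) w (Pi.single i 1, 0)) z
            (0, Pi.single i 1) * Φ z :=
      parts (contDiff_dvC hHc _) hΦ hcΦ _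
    have e2 : ∫ z : PS n, fderiv ℝ (fun w : PS n => ((H w : ℝ) : ℂ)) z (0, Pi.single i 1)
          * fderiv ℝ Φ z (Pi.single i 1, 0)
        = - ∫ z : PS n, fderiv ℝ (fun w : PS n =>
            fderiv ℝ (fun w' : PS n => ((H w' : ℝ) : ℂ)) w (0, Pi.single i 1)) z
            (Pi.single i 1, 0) * Φ z :=
      parts (contDiff_dvC hHc _) hΦ hcΦ _
    rw [integral_sub I1 I2, e1, e2]
    have hmm : (fun z : PS n => fderiv ℝ (fun w : PS n =>
            fderiv ℝ (fun w' : PS n => ((H w' : ℝ) : ℂ)) w (Pi.single i 1, 0)) z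
            (0, Pi.single i 1) * Φ z)
        = (fun z : PS n => fderiv ℝ (fun w : PS n =>
            fderiv ℝ (fun w' : PS n => ((H w' : ℝ) : ℂ)) w (0, Pi.single i 1)) z
            (Pi.single i 1, 0) * Φ z) := by
      funext z
      rw [mixed hHc z (0, Pi.single i 1) (Pi.single i 1, 0)]
    rw [hmm]
    ring
  -- pointwise Leibniz / conjugation identity
  have hterm : ∀ (z : PS n) (i : Fin n),
      dq i (fun w : PS n => ((H w : ℝ) : ℂ)) z * dp i Φ z
        - dp i (fun w : PS n => ((H w : ℝ) : ℂ)) z * dq i Φ z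
      = (starRingEnd ℂ) (Ψ₁ z) * (dq i (fun w : PS n => ((H w : ℝ) : ℂ)) z * dp i Ψ₂ z
          - dp i (fun w : PS n => ((H w : ℝ) : ℂ)) z * dq i Ψ₂ z)
        + (starRingEnd ℂ) (dq i (fun w : PS n => ((H w : ℝ) : ℂ)) z * dp i Ψ₁ z
          - dp i (fun w : PS n => ((H w : ℝ) : ℂ)) z * dq i Ψ₁ z) * Ψ₂ z := by
    intro z i
    have hq : dq i Φ z = (starRingEnd ℂ) (dq i Ψ₁ z) * Ψ₂ z
        + (starRingEnd ℂ) (Ψ₁ z) * dq i Ψ₂ z := by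
      have h1 := dq_mul hdΨ₁c hdΨ₂ i z
      rw [dq_conj hdΨ₁ i z] at h1
      rw [hΦdef]
      exact h1
    have hp : dp i Φ z = (starRingEnd ℂ) (dp i Ψ₁ z) * Ψ₂ z
        + (starRingEnd ℂ) (Ψ₁ z) * dp i Ψ₂ z := by
      have h1 := dp_mul hdΨ₁c hdΨ₂ i z
      rw [dp_conj hdΨ₁ i z] at h1
      rw [hΦdef]
      exact h1
    rw [hq, hp, dq_ofReal hdH i z, dp_ofReal hdH i z, map_sub, map_mul, map_mul,
      Complex.conj_ofReal, Complex.conj_ofReal]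
    ring
  have hLeib : ∀ z : PS n, pb (fun w : PS n => ((H w : ℝ) : ℂ)) Φ z
      = (starRingEnd ℂ) (Ψ₁ z) * pb (fun w : PS n => ((H w : ℝ) : ℂ)) Ψ₂ z
        + (starRingEnd ℂ) (pb (fun w : PS n => ((H w : ℝ) : ℂ)) Ψ₁ z) * Ψ₂ z := by
    intro z
    simp only [pb, map_sum]
    rw [Finset.mul_sum, Finset.sum_mul, ← Finset.sum_add_distrib]
    exact Finset.sum_congr rfl fun i _ => hterm z i
  have hpt : ∀ z : PS n, (starRingEnd ℂ) (Ψ₁ z) * Liouv ℏ H Ψ₂ z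
      - (starRingEnd ℂ) (Liouv ℏ H Ψ₁ z) * Ψ₂ z
      = (Complex.I * (ℏ : ℂ)) * pb (fun w : PS n => ((H w : ℝ) : ℂ)) Φ z := by
    intro z
    rw [hLeib z]
    simp only [Liouv, map_sub, map_mul, Complex.conj_ofReal, Complex.conj_I]
    ring
  have hA : Integrable (fun z : PS n => (starRingEnd ℂ) (Ψ₁ z) * Liouv ℏ H Ψ₂ z) := by
    apply (hΨ₁c.continuous.mul (hcontLiouv Ψ₂ hΨ₂)).integrable_of_hasCompactSupport
    exact (hc₁.comp_left (g := starRingEnd ℂ) (map_zero _)).mul_right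
  have hB : Integrable (fun z : PS n => (starRingEnd ℂ) (Liouv ℏ H Ψ₁ z) * Ψ₂ z) :=
    ((Complex.continuous_conj.comp (hcontLiouv Ψ₁ hΨ₁)).mul
      hΨ₂.continuous).integrable_of_hasCompactSupport hc₂.mul_left
  have key : (∫ z : PS n, ((starRingEnd ℂ) (Ψ₁ z) * Liouv ℏ H Ψ₂ z
      - (starRingEnd ℂ) (Liouv ℏ H Ψ₁ z) * Ψ₂ z)) = 0 := by
    calc ∫ z : PS n, ((starRingEnd ℂ) (Ψ₁ z) * Liouv ℏ H Ψ₂ z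
        - (starRingEnd ℂ) (Liouv ℏ H Ψ₁ z) * Ψ₂ z)
        = ∫ z : PS n, (Complex.I * (ℏ : ℂ)) * pb (fun w : PS n => ((H w : ℝ) : ℂ)) Φ z := by
          simp only [hpt]
      _ = (Complex.I * (ℏ : ℂ)) * ∫ z : PS n, pb (fun w : PS n => ((H w : ℝ) : ℂ)) Φ z :=
          integral_const_mul _ _
      _ = 0 := by rw [hzero, mul_zero]
  rw [integral_sub hA hB] at key
  exact sub_eq_zero.mp key
end
end

section
/- Madelung transform of the Schrödinger equation: let m > 0, ħ > 0, let V : ℝⁿ → ℝ be smooth, and let R, S : ℝ × ℝⁿ → ℝ be smooth with R(t,x) > 0 for all (t,x). Define ψ(t,x) := R(t,x) e^{i S(t,x)/ħ}. Then ψ satisfies the Schrödinger equation iħ ∂ₜψ = −(ħ²/(2m)) Δψ + V ψ if and only if the Madelung equations hold: ∂ₜS + |∇S|²/(2m) − (ħ²/(2m)) (ΔR)/R + V = 0 and ∂ₜR + (1/(2mR)) div(R² ∇S) = 0, where ∇, div and Δ are the spatial gradient, divergence and Laplacian on ℝⁿ. -/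
open Complex

noncomputable section

/-- Configuration space `ℝⁿ`. -/
abbrev Cfg (n : ℕ) := Fin n → ℝ

variable {n : ℕ}

/-- Spatial partial derivative `∂f/∂xⁱ` (complex-valued). -/
noncomputable def dx (i : Fin n) (f : Cfg n → ℂ) (x : Cfg n) : ℂ :=
  fderiv ℝ f x (Pi.single i 1)

/-- Spatial partial derivative `∂f/∂xⁱ` (real-valued). -/
noncomputable def dxR (i : Fin n) (f : Cfg n → ℝ) (x : Cfg n) : ℝ :=
  fderiv ℝ f x (Pi.single i 1)

/-- Laplacian `Δf = Σᵢ ∂²f/∂(xⁱ)²` (complex-valued). -/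
noncomputable def lapl (f : Cfg n → ℂ) (x : Cfg n) : ℂ :=
  ∑ i, dx i (fun y => dx i f y) x

/-- Laplacian `Δf = Σᵢ ∂²f/∂(xⁱ)²` (real-valued). -/
noncomputable def laplR (f : Cfg n → ℝ) (x : Cfg n) : ℝ :=
  ∑ i, dxR i (fun y => dxR i f y) x

lemma dx_eq {f : Cfg n → ℂ} {f' : (Cfg n) →L[ℝ] ℂ} {x : Cfg n} (h : HasFDerivAt f f' x) (i : Fin n) :
    dx i f x = f' (Pi.single i 1) := by rw [dx, h.fderiv]

lemma dxR_eq {f : Cfg n → ℝ} {f' : (Cfg n) →L[ℝ] ℝ} {x : Cfg n} (h : HasFDerivAt f f' x) (i : Fin n) :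
    dxR i f x = f' (Pi.single i 1) := by rw [dxR, h.fderiv]

-- differentiability of dxR i f for smooth f
lemma contDiff_dxR {f : Cfg n → ℝ} (hf : ContDiff ℝ (⊤:ℕ∞) f) (i : Fin n) :
    ContDiff ℝ (⊤:ℕ∞) (dxR i f) := by
  have h1 : ContDiff ℝ (⊤:ℕ∞) (fderiv ℝ f) := hf.fderiv_right (by exact_mod_cast le_top)
  exact (ContinuousLinearMap.apply ℝ ℝ (Pi.single i 1 : Cfg n)).contDiff.comp h1


lemma hasFDerivAt_ofReal {f : Cfg n → ℝ} {f' : (Cfg n) →L[ℝ] ℝ} {x : Cfg n}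
    (hf : HasFDerivAt f f' x) :
    HasFDerivAt (fun y => (f y : ℂ)) (Complex.ofRealCLM.comp f') x :=
  Complex.ofRealCLM.hasFDerivAt.comp x hf

lemma hasFDerivAt_exp_phase {g : Cfg n → ℝ} {g' : (Cfg n) →L[ℝ] ℝ} {x : Cfg n} (ℏ : ℝ)
    (hg : HasFDerivAt g g' x) :
    HasFDerivAt (fun y => Complex.exp (Complex.I * g y / ℏ))
      (Complex.exp (Complex.I * g x / ℏ) • ((Complex.I / ℏ) • (Complex.ofRealCLM.comp g'))) x := by
  have hu : HasFDerivAt (fun y => Complex.I * (g y : ℂ) / ℏ)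
      ((Complex.I / ℏ) • (Complex.ofRealCLM.comp g')) x := by
    have h1 := (hasFDerivAt_ofReal hg).const_mul (Complex.I / (ℏ : ℂ))
    have : (fun y => Complex.I * (g y : ℂ) / (ℏ:ℂ)) = fun y => (Complex.I / ℏ) * (g y : ℂ) := by
      funext y; rw [mul_div_right_comm]
    rw [this]
    simpa [ContinuousLinearMap.smul_def] using h1
  have := (Complex.hasDerivAt_exp ((Complex.I * (g x : ℂ) / ℏ))).comp_hasFDerivAt x hu
  exact this

lemma dx_mul_exp {F : Cfg n → ℂ} {g : Cfg n → ℝ} {x : Cfg n} (ℏ : ℝ)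
    (hF : DifferentiableAt ℝ F x) (hg : DifferentiableAt ℝ g x) (i : Fin n) :
    dx i (fun y => F y * Complex.exp (Complex.I * g y / ℏ)) x
      = (dx i F x + F x * Complex.I * dxR i g x / ℏ) * Complex.exp (Complex.I * g x / ℏ) := by
  have h : HasFDerivAt (fun y => F y * Complex.exp (Complex.I * g y / ℏ)) _ x :=
    (hF.hasFDerivAt.mul (hasFDerivAt_exp_phase ℏ hg.hasFDerivAt))
  rw [dx_eq h, dx_eq hF.hasFDerivAt, dxR_eq hg.hasFDerivAt]
  simp [ContinuousLinearMap.add_apply, ContinuousLinearMap.smul_apply,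
    ContinuousLinearMap.comp_apply, smul_eq_mul]
  ring

lemma dx_ofReal {f : Cfg n → ℝ} {x : Cfg n} (hf : DifferentiableAt ℝ f x) (i : Fin n) :
    dx i (fun y => (f y : ℂ)) x = (dxR i f x : ℂ) := by
  rw [dx_eq (hasFDerivAt_ofReal hf.hasFDerivAt), dxR_eq hf.hasFDerivAt]
  simp

lemma dx_ofReal_add_ofReal_mul_const {a b : Cfg n → ℝ} {x : Cfg n} (c : ℂ)
    (ha : DifferentiableAt ℝ a x) (hb : DifferentiableAt ℝ b x) (i : Fin n) :
    dx i (fun y => (a y : ℂ) + (b y : ℂ) * c) x = (dxR i a x : ℂ) + (dxR i b x : ℂ) * c := by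
  have h : HasFDerivAt (fun y => (a y : ℂ) + (b y : ℂ) * c) _ x := (hasFDerivAt_ofReal ha.hasFDerivAt).add
    ((hasFDerivAt_ofReal hb.hasFDerivAt).mul_const c)
  rw [dx_eq h, dxR_eq ha.hasFDerivAt, dxR_eq hb.hasFDerivAt]
  simp [ContinuousLinearMap.add_apply, ContinuousLinearMap.smul_apply,
    ContinuousLinearMap.comp_apply, smul_eq_mul, mul_comm]

lemma dxR_mul {a b : Cfg n → ℝ} {x : Cfg n}
    (ha : DifferentiableAt ℝ a x) (hb : DifferentiableAt ℝ b x) (i : Fin n) :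
    dxR i (fun y => a y * b y) x = dxR i a x * b x + a x * dxR i b x := by
  have h : HasFDerivAt (fun y => a y * b y) _ x := ha.hasFDerivAt.mul hb.hasFDerivAt
  rw [dxR_eq h, dxR_eq ha.hasFDerivAt, dxR_eq hb.hasFDerivAt]
  simp [ContinuousLinearMap.add_apply, ContinuousLinearMap.smul_apply, smul_eq_mul]
  ring

lemma lapl_formula (ℏ : ℝ) {f g : Cfg n → ℝ}
    (hf : ContDiff ℝ (⊤:ℕ∞) f) (hg : ContDiff ℝ (⊤:ℕ∞) g) (x : Cfg n) :
    lapl (fun y => (f y : ℂ) * Complex.exp (Complex.I * g y / ℏ)) x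
      = ( (((∑ i, dxR i (fun y => dxR i f y) x) : ℝ) : ℂ)
          - (f x : ℂ) * (((∑ i, dxR i g x ^ 2) : ℝ) : ℂ) / (ℏ:ℂ)^2
          + (((∑ i, (2 * dxR i f x * dxR i g x
                + f x * dxR i (fun y => dxR i g y) x)) : ℝ) : ℂ) * (Complex.I / ℏ) )
        * Complex.exp (Complex.I * g x / ℏ) := by
  have hfd := hf.differentiable (by simp)
  have hgd := hg.differentiable (by simp)
  have hdf : ∀ i, Differentiable ℝ (dxR i f) := fun i => (contDiff_dxR hf i).differentiable (by simp)
  have hdg : ∀ i, Differentiable ℝ (dxR i g) := fun i => (contDiff_dxR hg i).differentiable (by simp)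
  have step1 : ∀ (i : Fin n) (y : Cfg n),
      dx i (fun y' => (f y' : ℂ) * Complex.exp (Complex.I * g y' / ℏ)) y
        = ((dxR i f y : ℂ) + ((f y * dxR i g y : ℝ) : ℂ) * (Complex.I / ℏ))
            * Complex.exp (Complex.I * g y / ℏ) := by
    intro i y
    rw [dx_mul_exp ℏ (hasFDerivAt_ofReal (hfd y).hasFDerivAt).differentiableAt
      (hgd y) i, dx_ofReal (hfd y) i]
    push_cast
    ring
  have step2 : ∀ i : Fin n,
      dx i (fun y => dx i (fun y' => (f y' : ℂ) * Complex.exp (Complex.I * g y' / ℏ)) y) x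
        = ( (dxR i (fun y => dxR i f y) x : ℂ)
            + ((dxR i f x * dxR i g x + f x * dxR i (fun y => dxR i g y) x : ℝ) : ℂ) * (Complex.I / ℏ)
            + ((dxR i f x : ℂ) + ((f x * dxR i g x : ℝ) : ℂ) * (Complex.I / ℏ))
                * Complex.I * dxR i g x / ℏ )
          * Complex.exp (Complex.I * g x / ℏ) := by
    intro i
    have hfun : (fun y => dx i (fun y' => (f y' : ℂ) * Complex.exp (Complex.I * g y' / ℏ)) y)
        = fun y => ((dxR i f y : ℂ) + ((f y * dxR i g y : ℝ) : ℂ) * (Complex.I / ℏ))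
            * Complex.exp (Complex.I * g y / ℏ) := funext (step1 i)
    rw [hfun]
    have hFd : DifferentiableAt ℝ
        (fun y => (dxR i f y : ℂ) + ((f y * dxR i g y : ℝ) : ℂ) * (Complex.I / ℏ)) x := by
      apply DifferentiableAt.add
      · exact (hasFDerivAt_ofReal ((hdf i) x).hasFDerivAt).differentiableAt
      · exact (hasFDerivAt_ofReal ((hfd.mul (hdg i)) x).hasFDerivAt).differentiableAt.mul_const _
    rw [dx_mul_exp ℏ hFd (hgd x) i,
      dx_ofReal_add_ofReal_mul_const (b := fun y => f y * dxR i g y) (Complex.I / ℏ) ((hdf i) x)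
        ((hfd.mul (hdg i)) x) i,
      dxR_mul (hfd x) ((hdg i) x) i]
  unfold lapl
  rw [Finset.sum_congr rfl (fun i _ => step2 i), ← Finset.sum_mul]
  congr 1
  push_cast
  rw [Finset.mul_sum, Finset.sum_div, Finset.sum_mul, ← Finset.sum_sub_distrib,
    ← Finset.sum_add_distrib]
  refine Finset.sum_congr rfl (fun i _ => ?_)
  have hI : (Complex.I) * Complex.I = -1 := Complex.I_mul_I
  ring_nf
  rw [Complex.I_sq]
  ring

lemma time_deriv (ℏ : ℝ) {a b : ℝ → ℝ} {t : ℝ}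
    (ha : DifferentiableAt ℝ a t) (hb : DifferentiableAt ℝ b t) :
    deriv (fun s => (a s : ℂ) * Complex.exp (Complex.I * b s / ℏ)) t
      = (((deriv a t : ℝ) : ℂ) + (a t : ℂ) * ((deriv b t : ℝ) : ℂ) * (Complex.I / ℏ))
          * Complex.exp (Complex.I * b t / ℏ) := by
  have h1 : HasDerivAt (fun s => (a s : ℂ)) ((deriv a t : ℝ) : ℂ) t := ha.hasDerivAt.ofReal_comp
  have hu : HasDerivAt (fun s => Complex.I * (b s : ℂ) / ℏ)
      (Complex.I * ((deriv b t : ℝ) : ℂ) / ℏ) t :=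
    (hb.hasDerivAt.ofReal_comp.const_mul Complex.I).div_const _
  have h3 := hu.cexp
  have h4 : HasDerivAt (fun s => (a s : ℂ) * Complex.exp (Complex.I * b s / ℏ)) _ t := h1.mul h3
  rw [h4.deriv]
  ring

lemma mul_e_iff {e a b c d u v : ℂ} (he : e ≠ 0) :
    a * (b * e) = c * (d * e) + u * (v * e) ↔ a * b = c * d + u * v := by
  rw [show a * (b * e) = (a * b) * e by ring,
    show c * (d * e) + u * (v * e) = (c * d + u * v) * e by ring, mul_left_inj' he]

lemma complex_pair_iff {a b c d : ℝ} :
    ((a : ℂ) + (b : ℂ) * Complex.I = (c : ℂ) + (d : ℂ) * Complex.I) ↔ (a = c ∧ b = d) := by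
  simp [Complex.ext_iff]

/-- The Madelung transform: `ψ = R e^{iS/ℏ}` solves the
Schrödinger equation iff `(S, R)` solve the Madelung equations. -/
theorem madelung_schroedinger (n : ℕ) (m ℏ : ℝ) (hm : 0 < m) (hℏ : 0 < ℏ)
    (V : Cfg n → ℝ) (hV : ContDiff ℝ (⊤ : ℕ∞) V)
    (R S : ℝ × Cfg n → ℝ)
    (hR : ContDiff ℝ (⊤ : ℕ∞) R) (hS : ContDiff ℝ (⊤ : ℕ∞) S)
    (hpos : ∀ t x, 0 < R (t, x)) :
    (∀ (t : ℝ) (x : Cfg n),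
        Complex.I * ℏ * deriv (fun s => (R (s, x) : ℂ) * Complex.exp (Complex.I * S (s, x) / ℏ)) t
          = -(ℏ ^ 2 / (2 * m)) *
              lapl (fun y => (R (t, y) : ℂ) * Complex.exp (Complex.I * S (t, y) / ℏ)) x
            + (V x : ℂ) * ((R (t, x) : ℂ) * Complex.exp (Complex.I * S (t, x) / ℏ)))
      ↔
    (∀ (t : ℝ) (x : Cfg n),
        (deriv (fun s => S (s, x)) t + (∑ i, dxR i (fun y => S (t, y)) x ^ 2) / (2 * m)
            - (ℏ ^ 2 / (2 * m)) * laplR (fun y => R (t, y)) x / R (t, x) + V x = 0)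
          ∧ (deriv (fun s => R (s, x)) t
              + (1 / (2 * m * R (t, x))) *
                  (∑ i, dxR i (fun y => R (t, y) ^ 2 * dxR i (fun y' => S (t, y')) y) x) = 0)) := by
  refine forall_congr' fun t => forall_congr' fun x => ?_
  have hm0 : m ≠ 0 := hm.ne'
  have hℏ0 : ℏ ≠ 0 := hℏ.ne'
  have hℏc : (ℏ : ℂ) ≠ 0 := by exact_mod_cast hℏ0
  have hmc : (m : ℂ) ≠ 0 := by exact_mod_cast hm0
  have hRx : R (t, x) ≠ 0 := (hpos t x).ne'
  have hf : ContDiff ℝ (⊤:ℕ∞) (fun y => R (t, y)) := hR.comp (contDiff_const.prodMk contDiff_id)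
  have hg : ContDiff ℝ (⊤:ℕ∞) (fun y => S (t, y)) := hS.comp (contDiff_const.prodMk contDiff_id)
  have hat : DifferentiableAt ℝ (fun s => R (s, x)) t :=
    ((hR.comp (contDiff_id.prodMk contDiff_const)).differentiable (by simp)).differentiableAt
  have hbt : DifferentiableAt ℝ (fun s => S (s, x)) t :=
    ((hS.comp (contDiff_id.prodMk contDiff_const)).differentiable (by simp)).differentiableAt
  have hfd := hf.differentiable (by simp)
  have hgd := hg.differentiable (by simp)
  have hdf : ∀ i, Differentiable ℝ (dxR i (fun y => R (t, y))) :=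
    fun i => (contDiff_dxR hf i).differentiable (by simp)
  have hdg : ∀ i, Differentiable ℝ (dxR i (fun y => S (t, y))) :=
    fun i => (contDiff_dxR hg i).differentiable (by simp)
  have hT : deriv (fun s => (R (s, x) : ℂ) * Complex.exp (Complex.I * S (s, x) / ℏ)) t
      = (((deriv (fun s => R (s, x)) t : ℝ) : ℂ)
          + (R (t, x) : ℂ) * ((deriv (fun s => S (s, x)) t : ℝ) : ℂ) * (Complex.I / ℏ))
          * Complex.exp (Complex.I * S (t, x) / ℏ) := time_deriv ℏ hat hbt
  have hL := lapl_formula (f := fun y => R (t, y)) (g := fun y => S (t, y)) ℏ hf hg x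
  rw [hT, hL, mul_e_iff (Complex.exp_ne_zero _)]
  -- abbreviations
  set Rt := deriv (fun s => R (s, x)) t with hRtdef
  set St := deriv (fun s => S (s, x)) t with hStdef
  set Rx := R (t, x) with hRxdef
  set DR := ∑ i, dxR i (fun y => dxR i (fun y' => R (t, y')) y) x with hDRdef
  set Q := ∑ i, dxR i (fun y => S (t, y)) x ^ 2 with hQdef
  set P := ∑ i, (2 * dxR i (fun y => R (t, y)) x * dxR i (fun y => S (t, y)) x
      + R (t, x) * dxR i (fun y => dxR i (fun y' => S (t, y')) y) x) with hPdef
  have e1 : Complex.I * (ℏ:ℂ) * ((Rt:ℂ) + (Rx:ℂ) * (St:ℂ) * (Complex.I / ℏ))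
      = ((-(Rx * St) : ℝ) : ℂ) + ((ℏ * Rt : ℝ) : ℂ) * Complex.I := by
    push_cast
    field_simp
    ring_nf
    simp [Complex.I_sq]
    ring
  have e2 : -((ℏ:ℂ)^2 / (2 * m)) * ((DR:ℂ) - (Rx:ℂ) * (Q:ℂ) / (ℏ:ℂ)^2 + (P:ℂ) * (Complex.I / ℏ))
        + ((V x : ℝ) : ℂ) * (Rx:ℂ)
      = ((-(ℏ^2/(2*m)) * DR + Rx * Q / (2*m) + V x * Rx : ℝ) : ℂ)
        + ((-(ℏ/(2*m)) * P : ℝ) : ℂ) * Complex.I := by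
    push_cast
    field_simp [hℏc, hmc]
    ring
  rw [e1, e2, complex_pair_iff]
  have hlap : laplR (fun y => R (t, y)) x = DR := rfl
  have hsum2 : ∑ i, dxR i (fun y => R (t, y) ^ 2 * dxR i (fun y' => S (t, y')) y) x
      = Rx * P := by
    rw [hPdef, Finset.mul_sum]
    refine Finset.sum_congr rfl fun i _ => ?_
    have h2 : (fun y => R (t, y) ^ 2 * dxR i (fun y' => S (t, y')) y)
        = fun y => (R (t, y) * R (t, y)) * dxR i (fun y' => S (t, y')) y := by
      funext y; ring
    rw [h2, dxR_mul (a := fun y => R (t, y) * R (t, y))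
        (b := fun y => dxR i (fun y' => S (t, y')) y)
        ((hfd.mul hfd) x) ((hdg i) x) i,
      dxR_mul (hfd x) (hfd x) i, ← hRxdef]
    ring
  rw [hlap, hsum2]
  constructor
  · rintro ⟨h1, h2⟩
    constructor
    · field_simp at h1 ⊢
      linear_combination -h1
    · field_simp at h2 ⊢
      have h2x : Rt * (2 * m) = -P := by
        have hh : ℏ * (Rt * (2 * m)) = ℏ * (-P) := by linear_combination ℏ * h2
        exact mul_left_cancel₀ hℏ0 hh
      linear_combination h2x
  · rintro ⟨h1, h2⟩
    constructor
    · field_simp at h1 ⊢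
      linear_combination -h1
    · field_simp at h2 ⊢
      have h2x : Rt * (2 * m) + P = 0 := by
        have hh : Rx * (Rt * (2 * m) + P) = 0 := by linear_combination Rx * h2
        exact (mul_eq_zero.mp hh).resolve_left hRx
      linear_combination h2x
end
end

section
/- If H : ℝⁿ × ℝⁿ → ℝ is smooth and Ψ : ℝ × (ℝⁿ × ℝⁿ) → ℂ is smooth and satisfies the Koopman–van Hove equation iħ ∂ₜΨ = iħ {H, Ψ} − (Σᵢ pᵢ ∂H/∂pᵢ − H) Ψ, then the function ρ(t,z) := |Ψ(t,z)|² + Σᵢ ∂_{pᵢ}(pᵢ |Ψ(t,z)|²) + iħ {Ψ(t,·), conj(Ψ(t,·))}(z) is real-valued and satisfies the classical Liouville equation ∂ₜρ = {H, ρ}. -/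
open Complex

noncomputable section

variable {n : ℕ}

/-- The momentum-map expression of the classical Liouville density,
`ρ(Ψ) := |Ψ|² + Σᵢ ∂_{pᵢ}(pᵢ |Ψ|²) + iℏ {Ψ, conj Ψ}`. -/
noncomputable def rhoKvH (ℏ : ℝ) (Ψ : PS n → ℂ) (z : PS n) : ℂ :=
  (Complex.normSq (Ψ z) : ℂ)
    + ∑ i, dp i (fun w => (w.2 i : ℂ) * (Complex.normSq (Ψ w) : ℂ)) z
    + Complex.I * ℏ * pb Ψ (fun w => (starRingEnd ℂ) (Ψ w)) z

set_option maxHeartbeats 2000000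

namespace KvHAux

variable {n : ℕ}

abbrev E (n : ℕ) := ℝ × PS n

/-- smoothness predicate -/
abbrev S (f : E n → ℂ) : Prop := ContDiff ℝ (⊤ : ℕ∞) f

def pd (v : E n) (f : E n → ℂ) (x : E n) : ℂ := fderiv ℝ f x v

lemma S.diffAt {f : E n → ℂ} (hf : S f) (x : E n) : DifferentiableAt ℝ f x :=
  hf.differentiable (by simp) x

lemma S.pd {f : E n → ℂ} (hf : S f) (v : E n) : S (pd v f) := by
  have h : ContDiff ℝ (⊤ : ℕ∞) (fderiv ℝ f) := hf.fderiv_right (by exact_mod_cast le_top)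
  exact (ContinuousLinearMap.apply ℝ ℂ v).contDiff.comp h

lemma pd_add {f g : E n → ℂ} {x : E n} (hf : DifferentiableAt ℝ f x)
    (hg : DifferentiableAt ℝ g x) (v : E n) :
    pd v (fun y => f y + g y) x = pd v f x + pd v g x := by
  simp [pd, fderiv_fun_add hf hg]

lemma pd_sub {f g : E n → ℂ} {x : E n} (hf : DifferentiableAt ℝ f x)
    (hg : DifferentiableAt ℝ g x) (v : E n) :
    pd v (fun y => f y - g y) x = pd v f x - pd v g x := by
  simp [pd, fderiv_fun_sub hf hg]

lemma pd_mul {f g : E n → ℂ} {x : E n} (hf : DifferentiableAt ℝ f x)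
    (hg : DifferentiableAt ℝ g x) (v : E n) :
    pd v (fun y => f y * g y) x = pd v f x * g x + f x * pd v g x := by
  simp [pd, fderiv_fun_mul hf hg, smul_eq_mul]; ring

lemma pd_const_mul {f : E n → ℂ} {x : E n} (hf : DifferentiableAt ℝ f x) (c : ℂ) (v : E n) :
    pd v (fun y => c * f y) x = c * pd v f x := by
  simp [pd, fderiv_const_mul hf c]

lemma pd_sum {ι : Type*} {u : Finset ι} {A : ι → E n → ℂ} {x : E n}
    (h : ∀ i ∈ u, DifferentiableAt ℝ (A i) x) (v : E n) :
    pd v (fun y => ∑ i ∈ u, A i y) x = ∑ i ∈ u, pd v (A i) x := by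
  simp [pd, fderiv_fun_sum h]

lemma pd_conj {f : E n → ℂ} {x : E n} (hf : DifferentiableAt ℝ f x) (v : E n) :
    pd v (fun y => (starRingEnd ℂ) (f y)) x = (starRingEnd ℂ) (pd v f x) := by
  have h := ((Complex.conjCLE.toContinuousLinearMap).hasFDerivAt.comp x hf.hasFDerivAt)
  have h' : HasFDerivAt (fun y => (starRingEnd ℂ) (f y))
      ((Complex.conjCLE.toContinuousLinearMap).comp (fderiv ℝ f x)) x := h
  have : pd v (fun y => (starRingEnd ℂ) (f y)) x
      = ((Complex.conjCLE.toContinuousLinearMap).comp (fderiv ℝ f x)) v := by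
    rw [pd, h'.fderiv]
  simpa [pd] using this

lemma pd_ofReal {g : E n → ℝ} {x : E n} (hg : DifferentiableAt ℝ g x) (v : E n) :
    pd v (fun y => ((g y : ℝ) : ℂ)) x = ((fderiv ℝ g x v : ℝ) : ℂ) := by
  have h := (Complex.ofRealCLM.hasFDerivAt.comp x hg.hasFDerivAt)
  have h' : HasFDerivAt (fun y => ((g y : ℝ) : ℂ)) (Complex.ofRealCLM.comp (fderiv ℝ g x)) x := h
  rw [pd, h'.fderiv]; rfl

/-- symmetry of second derivatives -/
lemma pd_symm {f : E n → ℂ} (hf : S f) (v w : E n) (x : E n) :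
    pd v (pd w f) x = pd w (pd v f) x := by
  have hdf : ContDiff ℝ (⊤ : ℕ∞) (fderiv ℝ f) := hf.fderiv_right (by exact_mod_cast le_top)
  have h1 : ∀ y, HasFDerivAt f (fderiv ℝ f y) y := fun y => (hf.differentiable (by simp) y).hasFDerivAt
  have h2 : HasFDerivAt (fderiv ℝ f) (fderiv ℝ (fderiv ℝ f) x) x :=
    (hdf.differentiable (by simp) x).hasFDerivAt
  have hsymm := second_derivative_symmetric h1 h2
  have key : ∀ u : E n, pd u (pd w f) x = fderiv ℝ (fderiv ℝ f) x u w := by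
    intro u
    have : pd w f = fun y => (ContinuousLinearMap.apply ℝ ℂ w) (fderiv ℝ f y) := rfl
    rw [pd, this]
    have hc := ((ContinuousLinearMap.apply ℝ ℂ w).hasFDerivAt.comp x h2)
    have hc' : HasFDerivAt (fun y => (ContinuousLinearMap.apply ℝ ℂ w) (fderiv ℝ f y))
        (((ContinuousLinearMap.apply ℝ ℂ w)).comp (fderiv ℝ (fderiv ℝ f) x)) x := hc
    rw [hc'.fderiv]; rfl
  rw [key v]
  have key2 : pd w (pd v f) x = fderiv ℝ (fderiv ℝ f) x w v := by
    have : pd v f = fun y => (ContinuousLinearMap.apply ℝ ℂ v) (fderiv ℝ f y) := rfl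
    rw [pd, this]
    have hc := ((ContinuousLinearMap.apply ℝ ℂ v).hasFDerivAt.comp x h2)
    have hc' : HasFDerivAt (fun y => (ContinuousLinearMap.apply ℝ ℂ v) (fderiv ℝ f y))
        (((ContinuousLinearMap.apply ℝ ℂ v)).comp (fderiv ℝ (fderiv ℝ f) x)) x := hc
    rw [hc'.fderiv]; rfl
  rw [key2, hsymm v w]

def et : E n := (1, 0)
def eq1 (i : Fin n) : E n := (0, (Pi.single i 1, 0))
def ep1 (i : Fin n) : E n := (0, (0, Pi.single i 1))

def pbE (F G : E n → ℂ) (x : E n) : ℂ :=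
  ∑ i, (pd (eq1 i) F x * pd (ep1 i) G x - pd (ep1 i) F x * pd (eq1 i) G x)

lemma S.mul {f g : E n → ℂ} (hf : S f) (hg : S g) : S (fun y => f y * g y) := ContDiff.mul hf hg
lemma S.add {f g : E n → ℂ} (hf : S f) (hg : S g) : S (fun y => f y + g y) := ContDiff.add hf hg
lemma S.sub {f g : E n → ℂ} (hf : S f) (hg : S g) : S (fun y => f y - g y) := ContDiff.sub hf hg
lemma S.conj {f : E n → ℂ} (hf : S f) : S (fun y => (starRingEnd ℂ) (f y)) :=
  (Complex.conjCLE.toContinuousLinearMap.contDiff).comp hf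
lemma S.constMul {f : E n → ℂ} (hf : S f) (c : ℂ) : S (fun y => c * f y) :=
  (contDiff_const (c := c)).mul hf
lemma S.sum {ι : Type*} {u : Finset ι} {A : ι → E n → ℂ} (h : ∀ i ∈ u, S (A i)) :
    S (fun y => ∑ i ∈ u, A i y) := ContDiff.sum h
lemma S.ofReal {g : E n → ℝ} (hg : ContDiff ℝ (⊤ : ℕ∞) g) : S (fun y => ((g y : ℝ) : ℂ)) :=
  Complex.ofRealCLM.contDiff.comp hg

lemma S.pbE {F G : E n → ℂ} (hF : S F) (hG : S G) : S (pbE F G) :=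
  KvHAux.S.sum (fun i _ => ((hF.pd (eq1 i)).mul (hG.pd (ep1 i))).sub
    ((hF.pd (ep1 i)).mul (hG.pd (eq1 i))))

lemma pbE_pd {F G : E n → ℂ} (hF : S F) (hG : S G) (v : E n) (x : E n) :
    pd v (pbE F G) x = pbE (pd v F) G x + pbE F (pd v G) x := by
  have h1 : pd v (pbE F G) x
      = ∑ i, pd v (fun y => pd (eq1 i) F y * pd (ep1 i) G y - pd (ep1 i) F y * pd (eq1 i) G y) x :=
    pd_sum (fun i _ => (((hF.pd (eq1 i)).diffAt x).mul ((hG.pd (ep1 i)).diffAt x)).sub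
      (((hF.pd (ep1 i)).diffAt x).mul ((hG.pd (eq1 i)).diffAt x))) v
  rw [h1]
  show _ = (∑ i, _) + (∑ i, _)
  rw [← Finset.sum_add_distrib]
  refine Finset.sum_congr rfl fun i _ => ?_
  rw [pd_sub (f := fun y => pd (eq1 i) F y * pd (ep1 i) G y)
        (g := fun y => pd (ep1 i) F y * pd (eq1 i) G y) (((hF.pd (eq1 i)).diffAt x).mul ((hG.pd (ep1 i)).diffAt x))
        (((hF.pd (ep1 i)).diffAt x).mul ((hG.pd (eq1 i)).diffAt x)),
      pd_mul ((hF.pd (eq1 i)).diffAt x) ((hG.pd (ep1 i)).diffAt x),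
      pd_mul ((hF.pd (ep1 i)).diffAt x) ((hG.pd (eq1 i)).diffAt x),
      pd_symm hF v (eq1 i) x, pd_symm hF v (ep1 i) x,
      pd_symm hG v (eq1 i) x, pd_symm hG v (ep1 i) x]
  ring

lemma pbE_mul_right {F g h : E n → ℂ} {x : E n} (hg : DifferentiableAt ℝ g x)
    (hh : DifferentiableAt ℝ h x) :
    pbE F (fun y => g y * h y) x = pbE F g x * h x + g x * pbE F h x := by
  simp only [pbE, Finset.sum_mul, Finset.mul_sum, ← Finset.sum_add_distrib]
  refine Finset.sum_congr rfl fun i _ => ?_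
  rw [pd_mul hg hh, pd_mul hg hh]
  ring

lemma pbE_add_right {F g h : E n → ℂ} {x : E n} (hg : DifferentiableAt ℝ g x)
    (hh : DifferentiableAt ℝ h x) :
    pbE F (fun y => g y + h y) x = pbE F g x + pbE F h x := by
  simp only [pbE, ← Finset.sum_add_distrib]
  refine Finset.sum_congr rfl fun i _ => ?_
  rw [pd_add hg hh, pd_add hg hh]
  ring

lemma pbE_sub_right {F g h : E n → ℂ} {x : E n} (hg : DifferentiableAt ℝ g x)
    (hh : DifferentiableAt ℝ h x) :
    pbE F (fun y => g y - h y) x = pbE F g x - pbE F h x := by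
  simp only [pbE, ← Finset.sum_sub_distrib]
  refine Finset.sum_congr rfl fun i _ => ?_
  rw [pd_sub hg hh, pd_sub hg hh]
  ring

lemma pbE_const_mul_right {F g : E n → ℂ} {x : E n} (hg : DifferentiableAt ℝ g x) (c : ℂ) :
    pbE F (fun y => c * g y) x = c * pbE F g x := by
  simp only [pbE, Finset.mul_sum]
  refine Finset.sum_congr rfl fun i _ => ?_
  rw [pd_const_mul hg, pd_const_mul hg]
  ring

lemma pbE_sum_right {F : E n → ℂ} {ι : Type*} {u : Finset ι} {A : ι → E n → ℂ} {x : E n}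
    (h : ∀ j ∈ u, DifferentiableAt ℝ (A j) x) :
    pbE F (fun y => ∑ j ∈ u, A j y) x = ∑ j ∈ u, pbE F (A j) x := by
  simp only [pbE]
  rw [Finset.sum_comm]
  refine Finset.sum_congr rfl fun i _ => ?_
  rw [pd_sum h, pd_sum h, Finset.mul_sum, Finset.mul_sum, ← Finset.sum_sub_distrib]

lemma pbE_antisymm (F G : E n → ℂ) (x : E n) : pbE F G x = - pbE G F x := by
  simp only [pbE, ← Finset.sum_neg_distrib]
  exact Finset.sum_congr rfl fun i _ => by ring

lemma pbE_mul_left {F g h : E n → ℂ} {x : E n} (hg : DifferentiableAt ℝ g x)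
    (hh : DifferentiableAt ℝ h x) :
    pbE (fun y => g y * h y) F x = g x * pbE h F x + h x * pbE g F x := by
  rw [pbE_antisymm, pbE_mul_right hg hh, pbE_antisymm g F, pbE_antisymm h F]
  ring

lemma sum_antisymm {g : Fin n → Fin n → ℂ} (h : ∀ i j, g i j = - g j i) :
    ∑ i, ∑ j, g i j = 0 := by
  have h2 : (∑ i, ∑ j, g i j) = - ∑ i, ∑ j, g i j := by
    conv_lhs => rw [Finset.sum_comm]
    rw [← Finset.sum_neg_distrib]
    refine Finset.sum_congr rfl fun i _ => ?_
    rw [← Finset.sum_neg_distrib]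
    exact Finset.sum_congr rfl fun j _ => h j i
  linear_combination (1/2 : ℂ) * h2

lemma pbE_jacobi {K F G : E n → ℂ} (hK : S K) (hF : S F) (hG : S G) (x : E n) :
    pbE K (pbE F G) x = pbE (pbE K F) G x + pbE F (pbE K G) x := by
  rw [← sub_eq_zero]
  have key : pbE K (pbE F G) x - (pbE (pbE K F) G x + pbE F (pbE K G) x)
      = ∑ i, ∑ j,
        ((pd (eq1 i) K x * ( pd (eq1 j) (pd (ep1 i) F) x * pd (ep1 j) G x
              - pd (ep1 j) (pd (ep1 i) F) x * pd (eq1 j) G x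
              + pd (eq1 j) F x * pd (ep1 j) (pd (ep1 i) G) x
              - pd (ep1 j) F x * pd (eq1 j) (pd (ep1 i) G) x )
          - pd (ep1 i) K x * ( pd (eq1 j) (pd (eq1 i) F) x * pd (ep1 j) G x
              - pd (ep1 j) (pd (eq1 i) F) x * pd (eq1 j) G x
              + pd (eq1 j) F x * pd (ep1 j) (pd (eq1 i) G) x
              - pd (ep1 j) F x * pd (eq1 j) (pd (eq1 i) G) x ))
        - (( pd (eq1 j) (pd (eq1 i) K) x * pd (ep1 j) F x
              - pd (ep1 j) (pd (eq1 i) K) x * pd (eq1 j) F x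
              + pd (eq1 j) K x * pd (ep1 j) (pd (eq1 i) F) x
              - pd (ep1 j) K x * pd (eq1 j) (pd (eq1 i) F) x ) * pd (ep1 i) G x
          - ( pd (eq1 j) (pd (ep1 i) K) x * pd (ep1 j) F x
              - pd (ep1 j) (pd (ep1 i) K) x * pd (eq1 j) F x
              + pd (eq1 j) K x * pd (ep1 j) (pd (ep1 i) F) x
              - pd (ep1 j) K x * pd (eq1 j) (pd (ep1 i) F) x ) * pd (eq1 i) G x)
        - (pd (eq1 i) F x * ( pd (eq1 j) (pd (ep1 i) K) x * pd (ep1 j) G x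
              - pd (ep1 j) (pd (ep1 i) K) x * pd (eq1 j) G x
              + pd (eq1 j) K x * pd (ep1 j) (pd (ep1 i) G) x
              - pd (ep1 j) K x * pd (eq1 j) (pd (ep1 i) G) x )
          - pd (ep1 i) F x * ( pd (eq1 j) (pd (eq1 i) K) x * pd (ep1 j) G x
              - pd (ep1 j) (pd (eq1 i) K) x * pd (eq1 j) G x
              + pd (eq1 j) K x * pd (ep1 j) (pd (eq1 i) G) x
              - pd (ep1 j) K x * pd (eq1 j) (pd (eq1 i) G) x ))) := by
    simp only [pbE]
    simp only [pbE_pd hF hG, pbE_pd hK hF, pbE_pd hK hG]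
    simp only [pbE, Finset.mul_sum, Finset.sum_mul, ← Finset.sum_add_distrib,
      ← Finset.sum_sub_distrib]
    exact Finset.sum_congr rfl fun i _ => Finset.sum_congr rfl fun j _ => by ring
  rw [key]
  refine sum_antisymm fun i j => ?_
  simp only [pd_symm hK (eq1 j) (eq1 i) x, pd_symm hK (eq1 j) (ep1 i) x,
    pd_symm hK (ep1 j) (eq1 i) x, pd_symm hK (ep1 j) (ep1 i) x,
    pd_symm hF (eq1 j) (eq1 i) x, pd_symm hF (eq1 j) (ep1 i) x,
    pd_symm hF (ep1 j) (eq1 i) x, pd_symm hF (ep1 j) (ep1 i) x,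
    pd_symm hG (eq1 j) (eq1 i) x, pd_symm hG (eq1 j) (ep1 i) x,
    pd_symm hG (ep1 j) (eq1 i) x, pd_symm hG (ep1 j) (ep1 i) x]
  ring

def P (i : Fin n) (x : E n) : ℂ := ((x.2.2 i : ℝ) : ℂ)

def Pclm (i : Fin n) : E n →L[ℝ] ℂ :=
  Complex.ofRealCLM.comp ((ContinuousLinearMap.proj i).comp
    ((ContinuousLinearMap.snd ℝ (Fin n → ℝ) (Fin n → ℝ)).comp
      (ContinuousLinearMap.snd ℝ ℝ (PS n))))

lemma P_eq_clm (i : Fin n) : P i = ⇑(Pclm i) := rfl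

lemma P_smooth (i : Fin n) : S (P (n := n) i) := by
  rw [P_eq_clm]; exact (Pclm i).contDiff

lemma pd_P (i : Fin n) (v x : E n) : pd v (P i) x = ((v.2.2 i : ℝ) : ℂ) := by
  rw [pd, P_eq_clm, ContinuousLinearMap.fderiv]; rfl

lemma pd_P_et (i : Fin n) (x : E n) : pd et (P i) x = 0 := by
  rw [pd_P]; simp [et, Prod.snd]

lemma pd_P_eq1 (i j : Fin n) (x : E n) : pd (eq1 j) (P i) x = 0 := by
  rw [pd_P]; simp [eq1]

lemma pd_P_ep1 (i j : Fin n) (x : E n) :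
    pd (ep1 j) (P i) x = if i = j then (1 : ℂ) else 0 := by
  rw [pd_P]
  simp [ep1, Pi.single_apply, apply_ite Complex.ofReal]

lemma pd_P_ep1_same (i : Fin n) (x : E n) : pd (ep1 i) (P i) x = 1 := by
  rw [pd_P_ep1]; simp

lemma pbE_P_right (F : E n → ℂ) (i : Fin n) (x : E n) : pbE F (P i) x = pd (eq1 i) F x := by
  simp only [pbE, pd_P_eq1, pd_P_ep1, mul_zero, sub_zero, mul_ite, mul_one]
  simp [Finset.sum_ite_eq]

lemma pbE_P_left (F : E n → ℂ) (i : Fin n) (x : E n) : pbE (P i) F x = - pd (eq1 i) F x := by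
  rw [pbE_antisymm, pbE_P_right]

lemma pbE_sub_left {F g h : E n → ℂ} {x : E n} (hg : DifferentiableAt ℝ g x)
    (hh : DifferentiableAt ℝ h x) :
    pbE (fun y => g y - h y) F x = pbE g F x - pbE h F x := by
  rw [pbE_antisymm, pbE_sub_right hg hh, pbE_antisymm g F, pbE_antisymm h F]; ring

lemma pbE_sum_left {F : E n → ℂ} {ι : Type*} {u : Finset ι} {A : ι → E n → ℂ} {x : E n}
    (h : ∀ j ∈ u, DifferentiableAt ℝ (A j) x) :
    pbE (fun y => ∑ j ∈ u, A j y) F x = ∑ j ∈ u, pbE (A j) F x := by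
  rw [pbE_antisymm, pbE_sum_right h, ← Finset.sum_neg_distrib]
  exact Finset.sum_congr rfl fun j _ => (pbE_antisymm (A j) F x).symm

lemma key_identity {K D : E n → ℂ} (hK : S K) (hD : S D) (x : E n) :
    (∑ i, pd (ep1 i) (fun y => P i y * pbE K D y) x)
      - pbE (fun y => (∑ j, P j y * pd (ep1 j) K y) - K y) D x
    = ∑ i, pbE K (fun y => pd (ep1 i) (fun y' => P i y' * D y') y) x := by
  have hPb : S (pbE K D) := hK.pbE hD
  have hstep1 : ∀ i : Fin n, pd (ep1 i) (fun y => P i y * pbE K D y) x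
      = pbE K D x + P i x * (pbE (pd (ep1 i) K) D x + pbE K (pd (ep1 i) D) x) := by
    intro i
    rw [pd_mul ((P_smooth i).diffAt x) (hPb.diffAt x), pd_P_ep1_same, one_mul,
      pbE_pd hK hD (ep1 i) x]
  have hstep2 : pbE (fun y => (∑ j, P j y * pd (ep1 j) K y) - K y) D x
      = (∑ j, (P j x * pbE (pd (ep1 j) K) D x - pd (ep1 j) K x * pd (eq1 j) D x))
        - pbE K D x := by
    rw [pbE_sub_left (((S.sum (fun j _ => (P_smooth j).mul (hK.pd (ep1 j))))).diffAt x)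
        (hK.diffAt x),
      pbE_sum_left (fun j _ => ((P_smooth j).mul (hK.pd (ep1 j))).diffAt x)]
    congr 1
    refine Finset.sum_congr rfl fun j _ => ?_
    rw [pbE_mul_left ((P_smooth j).diffAt x) ((hK.pd (ep1 j)).diffAt x), pbE_P_left]
    ring
  have hstep3 : ∀ i : Fin n, (fun y => pd (ep1 i) (fun y' => P i y' * D y') y)
      = fun y => D y + P i y * pd (ep1 i) D y := by
    intro i; funext y
    rw [pd_mul ((P_smooth i).diffAt y) (hD.diffAt y), pd_P_ep1_same, one_mul]
  have hstep4 : ∀ i : Fin n, pbE K (fun y => pd (ep1 i) (fun y' => P i y' * D y') y) x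
      = pbE K D x + (pd (eq1 i) K x * pd (ep1 i) D x + P i x * pbE K (pd (ep1 i) D) x) := by
    intro i
    rw [hstep3 i, pbE_add_right (hD.diffAt x) (((P_smooth i).mul (hD.pd (ep1 i))).diffAt x),
      pbE_mul_right ((P_smooth i).diffAt x) ((hD.pd (ep1 i)).diffAt x), pbE_P_right]
  simp only [hstep1, hstep2, hstep4]
  have h5 : (∑ i, (pbE K D x + P i x * (pbE (pd (ep1 i) K) D x + pbE K (pd (ep1 i) D) x)))
        - (∑ j, (P j x * pbE (pd (ep1 j) K) D x - pd (ep1 j) K x * pd (eq1 j) D x))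
      = (∑ i, (pbE K D x + (pd (eq1 i) K x * pd (ep1 i) D x + P i x * pbE K (pd (ep1 i) D) x)))
        - (∑ i, (pd (eq1 i) K x * pd (ep1 i) D x - pd (ep1 i) K x * pd (eq1 i) D x)) := by
    rw [← Finset.sum_sub_distrib, ← Finset.sum_sub_distrib]
    exact Finset.sum_congr rfl fun i _ => by ring
  have h6 : (∑ i, (pd (eq1 i) K x * pd (ep1 i) D x - pd (ep1 i) K x * pd (eq1 i) D x))
      = pbE K D x := rfl
  rw [h6] at h5
  linear_combination h5

lemma pbE_add_left {F g h : E n → ℂ} {x : E n} (hg : DifferentiableAt ℝ g x)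
    (hh : DifferentiableAt ℝ h x) :
    pbE (fun y => g y + h y) F x = pbE g F x + pbE h F x := by
  rw [pbE_antisymm, pbE_add_right hg hh, pbE_antisymm g F, pbE_antisymm h F]; ring

lemma pbE_const_mul_left {F g : E n → ℂ} {x : E n} (hg : DifferentiableAt ℝ g x) (c : ℂ) :
    pbE (fun y => c * g y) F x = c * pbE g F x := by
  rw [pbE_antisymm, pbE_const_mul_right hg, pbE_antisymm g F]; ring

def Cf (Ψ : E n → ℂ) : E n → ℂ := fun x => (starRingEnd ℂ) (Ψ x)
def Df (Ψ : E n → ℂ) : E n → ℂ := fun x => Ψ x * Cf Ψ x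
def HEf (H : PS n → ℝ) : E n → ℂ := fun x => ((H x.2 : ℝ) : ℂ)
def Lff (H : PS n → ℝ) : E n → ℂ := fun x => (∑ j, P j x * pd (ep1 j) (HEf H) x) - HEf H x
def Gf (Ψ : E n → ℂ) (i : Fin n) : E n → ℂ := fun y => P i y * Df Ψ y
def Rf (ℏ : ℝ) (Ψ : E n → ℂ) : E n → ℂ :=
  fun x => Df Ψ x + (∑ i, pd (ep1 i) (Gf Ψ i) x) + Complex.I * (ℏ : ℂ) * pbE Ψ (Cf Ψ) x

section MainE

variable {Ψ : E n → ℂ} {H : PS n → ℝ} {ℏ : ℝ}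

lemma hC_smooth (hΨ : S Ψ) : S (Cf Ψ) := hΨ.conj
lemma hD_smooth (hΨ : S Ψ) : S (Df Ψ) := hΨ.mul (hC_smooth hΨ)
lemma hHE_smooth (hH : ContDiff ℝ (⊤ : ℕ∞) H) : S (HEf H) :=
  S.ofReal (hH.comp contDiff_snd)
lemma hL_smooth (hH : ContDiff ℝ (⊤ : ℕ∞) H) : S (Lff H) :=
  (S.sum (fun j _ => (P_smooth j).mul ((hHE_smooth hH).pd (ep1 j)))).sub (hHE_smooth hH)
lemma hG_smooth (hΨ : S Ψ) (i : Fin n) : S (Gf Ψ i) := (P_smooth i).mul (hD_smooth hΨ)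
lemma hR_smooth (hΨ : S Ψ) : S (Rf ℏ Ψ) :=
  (((hD_smooth hΨ).add (S.sum (fun i _ => ((hG_smooth hΨ i)).pd (ep1 i)))).add
    ((hΨ.pbE (hC_smooth hΨ)).constMul _))

lemma main_real (hΨ : S Ψ) (ℏ : ℝ) (x : E n) : (Rf ℏ Ψ x).im = 0 := by
  have hC : S (Cf Ψ) := hC_smooth hΨ
  have h1 : (Df Ψ x).im = 0 := by simp [Df, Cf, Complex.mul_conj]
  have hnormSq : ContDiff ℝ (⊤ : ℕ∞) (fun y : E n => Complex.normSq (Ψ y)) := by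
    have hre : ContDiff ℝ (⊤ : ℕ∞) (fun y : E n => (Ψ y).re) := Complex.reCLM.contDiff.comp hΨ
    have him : ContDiff ℝ (⊤ : ℕ∞) (fun y : E n => (Ψ y).im) := Complex.imCLM.contDiff.comp hΨ
    have heq : (fun y : E n => Complex.normSq (Ψ y))
        = fun y => (Ψ y).re * (Ψ y).re + (Ψ y).im * (Ψ y).im := by
      funext y; simp [Complex.normSq_apply]
    rw [heq]; exact (hre.mul hre).add (him.mul him)
  have h2 : ∀ i : Fin n, (pd (ep1 i) (Gf Ψ i) x).im = 0 := by
    intro i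
    have hfun : Gf Ψ i = fun y => (((y.2.2 i * Complex.normSq (Ψ y) : ℝ)) : ℂ) := by
      funext y; simp [Gf, Df, Cf, P, Complex.mul_conj]
    have hcoCLM : (fun y : E n => y.2.2 i) = ⇑((ContinuousLinearMap.proj i).comp
        ((ContinuousLinearMap.snd ℝ (Fin n → ℝ) (Fin n → ℝ)).comp
          (ContinuousLinearMap.snd ℝ ℝ (PS n)))) := rfl
    have hco : ContDiff ℝ (⊤ : ℕ∞) (fun y : E n => y.2.2 i) := by
      rw [hcoCLM]; exact ContinuousLinearMap.contDiff _
    have hg : DifferentiableAt ℝ (fun y : E n => y.2.2 i * Complex.normSq (Ψ y)) x :=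
      ((hco.mul hnormSq).differentiable (by simp)) x
    rw [hfun, pd_ofReal hg]
    simp
  have h3 : (pbE Ψ (Cf Ψ) x).re = 0 := by
    have hcv : ∀ v : E n, pd v (Cf Ψ) x = (starRingEnd ℂ) (pd v Ψ x) :=
      fun v => pd_conj (hΨ.diffAt x) v
    simp only [pbE, hcv, Complex.re_sum]
    refine Finset.sum_eq_zero fun i _ => ?_
    simp [Complex.mul_re, Complex.sub_re, Complex.conj_re, Complex.conj_im]
    ring
  have : (Rf ℏ Ψ x).im = (Df Ψ x).im + (∑ i, pd (ep1 i) (Gf Ψ i) x).im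
      + (Complex.I * (ℏ : ℂ) * pbE Ψ (Cf Ψ) x).im := by
    simp [Rf, Complex.add_im]
  rw [this, h1, Complex.im_sum]
  rw [Finset.sum_eq_zero fun i _ => h2 i]
  simp [Complex.mul_im, Complex.mul_re, h3]

lemma hHE_real (hH : ContDiff ℝ (⊤ : ℕ∞) H) (v x : E n) :
    (starRingEnd ℂ) (pd v (HEf H) x) = pd v (HEf H) x := by
  have h : pd v (HEf H) x = ((fderiv ℝ (fun y : E n => H y.2) x v : ℝ) : ℂ) :=
    pd_ofReal (((hH.comp contDiff_snd).differentiable (by simp)) x) v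
  rw [h, Complex.conj_ofReal]

lemma hP_real (j : Fin n) (x : E n) : (starRingEnd ℂ) (P j x) = P j x :=
  Complex.conj_ofReal _

lemma hL_real (hH : ContDiff ℝ (⊤ : ℕ∞) H) (x : E n) :
    (starRingEnd ℂ) (Lff H x) = Lff H x := by
  have hHEx : (starRingEnd ℂ) (HEf H x) = HEf H x := Complex.conj_ofReal _
  simp only [Lff, map_sub, map_sum, map_mul, hHEx, hP_real, hHE_real hH]

lemma conj_pbE_HE (hΨ : S Ψ) (hH : ContDiff ℝ (⊤ : ℕ∞) H) (x : E n) :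
    (starRingEnd ℂ) (pbE (HEf H) Ψ x) = pbE (HEf H) (Cf Ψ) x := by
  simp only [pbE, map_sum, map_sub, map_mul, hHE_real hH]
  refine Finset.sum_congr rfl fun i _ => ?_
  rw [← pd_conj (hΨ.diffAt x) (ep1 i), ← pd_conj (hΨ.diffAt x) (eq1 i)]
  rfl

lemma kvh_conj (hΨ : S Ψ) (hH : ContDiff ℝ (⊤ : ℕ∞) H)
    (hkv : ∀ x, pd et Ψ x = pbE (HEf H) Ψ x + (Complex.I / (ℏ : ℂ)) * (Lff H x * Ψ x)) :
    ∀ x, pd et (Cf Ψ) x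
      = pbE (HEf H) (Cf Ψ) x - (Complex.I / (ℏ : ℂ)) * (Lff H x * Cf Ψ x) := by
  intro x
  have h1 : pd et (Cf Ψ) x = (starRingEnd ℂ) (pd et Ψ x) := pd_conj (hΨ.diffAt x) et
  rw [h1, hkv x, map_add, map_mul, map_mul, hL_real hH, conj_pbE_HE hΨ hH]
  have : (starRingEnd ℂ) (Complex.I / (ℏ : ℂ)) = -(Complex.I / (ℏ : ℂ)) := by
    rw [map_div₀, Complex.conj_I, Complex.conj_ofReal]; ring
  rw [this]
  have : (starRingEnd ℂ) (Ψ x) = Cf Ψ x := rfl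
  rw [this]; ring

lemma main_evol (hℏ : ℏ ≠ 0) (hΨ : S Ψ) (hH : ContDiff ℝ (⊤ : ℕ∞) H)
    (hkv : ∀ x, pd et Ψ x = pbE (HEf H) Ψ x + (Complex.I / (ℏ : ℂ)) * (Lff H x * Ψ x)) :
    ∀ x, pd et (Rf ℏ Ψ) x = pbE (HEf H) (Rf ℏ Ψ) x := by
  intro x
  have hC : S (Cf Ψ) := hC_smooth hΨ
  have hD : S (Df Ψ) := hD_smooth hΨ
  have hHE : S (HEf H) := hHE_smooth hH
  have hL : S (Lff H) := hL_smooth hH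
  have hG : ∀ i, S (Gf Ψ i) := hG_smooth hΨ
  have hPb : S (pbE Ψ (Cf Ψ)) := hΨ.pbE hC
  have hSum : S (fun y => ∑ i, pd (ep1 i) (Gf Ψ i) y) :=
    S.sum (fun i _ => (hG i).pd (ep1 i))
  have hThird : S (fun y => Complex.I * (ℏ : ℂ) * pbE Ψ (Cf Ψ) y) := hPb.constMul _
  have hkvc := kvh_conj hΨ hH hkv
  -- step A
  have hDt : ∀ y, pd et (Df Ψ) y = pbE (HEf H) (Df Ψ) y := by
    intro y
    calc pd et (Df Ψ) y = pd et Ψ y * Cf Ψ y + Ψ y * pd et (Cf Ψ) y :=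
          pd_mul (hΨ.diffAt y) (hC.diffAt y) et
      _ = pbE (HEf H) Ψ y * Cf Ψ y + Ψ y * pbE (HEf H) (Cf Ψ) y := by
          rw [hkv y, hkvc y]; ring
      _ = pbE (HEf H) (Df Ψ) y := (pbE_mul_right (hΨ.diffAt y) (hC.diffAt y)).symm
  -- step B
  have hGt : ∀ i, pd et (Gf Ψ i) = fun y => P i y * pbE (HEf H) (Df Ψ) y := by
    intro i; funext y
    calc pd et (Gf Ψ i) y = pd et (P i) y * Df Ψ y + P i y * pd et (Df Ψ) y :=
          pd_mul ((P_smooth i).diffAt y) (hD.diffAt y) et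
      _ = P i y * pbE (HEf H) (Df Ψ) y := by rw [pd_P_et, hDt y]; ring
  have hB : ∀ i, pd et (pd (ep1 i) (Gf Ψ i)) x
      = pd (ep1 i) (fun y => P i y * pbE (HEf H) (Df Ψ) y) x := by
    intro i
    rw [pd_symm (hG i) et (ep1 i) x, hGt i]
  -- step C
  have hCt : pd et (pbE Ψ (Cf Ψ)) x
      = pbE (HEf H) (pbE Ψ (Cf Ψ)) x + (Complex.I / (ℏ : ℂ)) * pbE (Lff H) (Df Ψ) x := by
    have e1 : pd et Ψ = fun y => pbE (HEf H) Ψ y + (Complex.I / (ℏ : ℂ)) * (Lff H y * Ψ y) :=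
      funext hkv
    have e2 : pd et (Cf Ψ)
        = fun y => pbE (HEf H) (Cf Ψ) y - (Complex.I / (ℏ : ℂ)) * (Lff H y * Cf Ψ y) :=
      funext hkvc
    have hLΨ : S (fun y => Lff H y * Ψ y) := hL.mul hΨ
    have hLC : S (fun y => Lff H y * Cf Ψ y) := hL.mul hC
    have s1 : pbE (pd et Ψ) (Cf Ψ) x = pbE (pbE (HEf H) Ψ) (Cf Ψ) x
        + (Complex.I / (ℏ : ℂ)) * (Lff H x * pbE Ψ (Cf Ψ) x + Ψ x * pbE (Lff H) (Cf Ψ) x) := by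
      rw [e1, pbE_add_left ((hHE.pbE hΨ).diffAt x) ((hLΨ.constMul _).diffAt x),
        pbE_const_mul_left (hLΨ.diffAt x),
        pbE_mul_left (hL.diffAt x) (hΨ.diffAt x)]
    have s2 : pbE Ψ (pd et (Cf Ψ)) x = pbE Ψ (pbE (HEf H) (Cf Ψ)) x
        - (Complex.I / (ℏ : ℂ)) * (pbE Ψ (Lff H) x * Cf Ψ x + Lff H x * pbE Ψ (Cf Ψ) x) := by
      rw [e2, pbE_sub_right ((hHE.pbE hC).diffAt x) ((hLC.constMul _).diffAt x),
        pbE_const_mul_right (hLC.diffAt x),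
        pbE_mul_right (hL.diffAt x) (hC.diffAt x)]
    have hjac := pbE_jacobi hHE hΨ hC x
    have hanti := pbE_antisymm Ψ (Lff H) x
    have hlei : pbE (Lff H) (Df Ψ) x
        = pbE (Lff H) Ψ x * Cf Ψ x + Ψ x * pbE (Lff H) (Cf Ψ) x :=
      pbE_mul_right (hΨ.diffAt x) (hC.diffAt x)
    rw [pbE_pd hΨ hC et x, s1, s2]
    linear_combination (-1 : ℂ) * hjac - (Complex.I / (ℏ : ℂ)) * hlei
      - (Complex.I / (ℏ : ℂ)) * Cf Ψ x * hanti
  -- assemble LHS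
  have hLHS : pd et (Rf ℏ Ψ) x
      = pbE (HEf H) (Df Ψ) x
        + (∑ i, pd (ep1 i) (fun y => P i y * pbE (HEf H) (Df Ψ) y) x)
        + Complex.I * (ℏ : ℂ) * (pbE (HEf H) (pbE Ψ (Cf Ψ)) x
            + (Complex.I / (ℏ : ℂ)) * pbE (Lff H) (Df Ψ) x) := by
    have h1 : pd et (Rf ℏ Ψ) x
        = pd et (fun y => Df Ψ y + ∑ i, pd (ep1 i) (Gf Ψ i) y) x
          + pd et (fun y => Complex.I * (ℏ : ℂ) * pbE Ψ (Cf Ψ) y) x :=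
      pd_add ((hD.add hSum).diffAt x) (hThird.diffAt x) et
    have h2 : pd et (fun y => Df Ψ y + ∑ i, pd (ep1 i) (Gf Ψ i) y) x
        = pd et (Df Ψ) x + pd et (fun y => ∑ i, pd (ep1 i) (Gf Ψ i) y) x :=
      pd_add (hD.diffAt x) (hSum.diffAt x) et
    have h3 : pd et (fun y => ∑ i, pd (ep1 i) (Gf Ψ i) y) x
        = ∑ i, pd et (pd (ep1 i) (Gf Ψ i)) x :=
      pd_sum (fun i _ => ((hG i).pd (ep1 i)).diffAt x) et
    have h4 : pd et (fun y => Complex.I * (ℏ : ℂ) * pbE Ψ (Cf Ψ) y) x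
        = Complex.I * (ℏ : ℂ) * pd et (pbE Ψ (Cf Ψ)) x := pd_const_mul (hPb.diffAt x) _ et
    rw [h1, h2, h3, h4, hDt x, hCt,
      Finset.sum_congr rfl fun i _ => hB i]
  -- assemble RHS
  have hRHS : pbE (HEf H) (Rf ℏ Ψ) x
      = pbE (HEf H) (Df Ψ) x
        + (∑ i, pbE (HEf H) (pd (ep1 i) (Gf Ψ i)) x)
        + Complex.I * (ℏ : ℂ) * pbE (HEf H) (pbE Ψ (Cf Ψ)) x := by
    have h1 : pbE (HEf H) (Rf ℏ Ψ) x
        = pbE (HEf H) (fun y => Df Ψ y + ∑ i, pd (ep1 i) (Gf Ψ i) y) x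
          + pbE (HEf H) (fun y => Complex.I * (ℏ : ℂ) * pbE Ψ (Cf Ψ) y) x :=
      pbE_add_right ((hD.add hSum).diffAt x) (hThird.diffAt x)
    have h2 : pbE (HEf H) (fun y => Df Ψ y + ∑ i, pd (ep1 i) (Gf Ψ i) y) x
        = pbE (HEf H) (Df Ψ) x + pbE (HEf H) (fun y => ∑ i, pd (ep1 i) (Gf Ψ i) y) x :=
      pbE_add_right (hD.diffAt x) (hSum.diffAt x)
    have h3 : pbE (HEf H) (fun y => ∑ i, pd (ep1 i) (Gf Ψ i) y) x
        = ∑ i, pbE (HEf H) (pd (ep1 i) (Gf Ψ i)) x :=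
      pbE_sum_right (fun i _ => ((hG i).pd (ep1 i)).diffAt x)
    have h4 : pbE (HEf H) (fun y => Complex.I * (ℏ : ℂ) * pbE Ψ (Cf Ψ) y) x
        = Complex.I * (ℏ : ℂ) * pbE (HEf H) (pbE Ψ (Cf Ψ)) x :=
      pbE_const_mul_right (hPb.diffAt x) _
    rw [h1, h2, h3, h4]
  have hkey : (∑ i, pd (ep1 i) (fun y => P i y * pbE (HEf H) (Df Ψ) y) x)
      - pbE (Lff H) (Df Ψ) x
      = ∑ i, pbE (HEf H) (pd (ep1 i) (Gf Ψ i)) x := key_identity hHE hD x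
  have hIb : Complex.I * (ℏ : ℂ) * (Complex.I / (ℏ : ℂ)) = -1 := by
    have hne : (ℏ : ℂ) ≠ 0 := Complex.ofReal_ne_zero.mpr hℏ
    field_simp
    linear_combination Complex.I_mul_I
  rw [hLHS, hRHS]
  linear_combination hkey + pbE (Lff H) (Df Ψ) x * hIb

end MainE


section Slice

variable {f : E n → ℂ} {t : ℝ} {z : PS n}

lemma deriv_slice (hf : DifferentiableAt ℝ f (t, z)) :
    deriv (fun s => f (s, z)) t = pd et f (t, z) := by
  have h1 : HasDerivAt (fun s : ℝ => ((s, z) : E n)) ((1 : ℝ), (0 : PS n)) t :=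
    (hasDerivAt_id t).prodMk (hasDerivAt_const t z)
  have h2 := hf.hasFDerivAt.comp_hasDerivAt t h1
  have h3 : HasDerivAt (fun s => f (s, z)) (fderiv ℝ f (t, z) ((1 : ℝ), (0 : PS n))) t := h2
  rw [h3.deriv]; rfl

lemma dq_slice (hf : DifferentiableAt ℝ f (t, z)) (i : Fin n) :
    dq i (fun w => f (t, w)) z = pd (eq1 i) f (t, z) := by
  have h1 : HasFDerivAt (fun w : PS n => ((t, w) : E n))
      (((0 : PS n →L[ℝ] ℝ)).prod (ContinuousLinearMap.id ℝ (PS n))) z :=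
    (hasFDerivAt_const t z).prodMk (hasFDerivAt_id z)
  have h2 := hf.hasFDerivAt.comp z h1
  have h3 : HasFDerivAt (fun w => f (t, w))
      ((fderiv ℝ f (t, z)).comp
        (((0 : PS n →L[ℝ] ℝ)).prod (ContinuousLinearMap.id ℝ (PS n)))) z := h2
  rw [dq, h3.fderiv]; rfl

lemma dp_slice (hf : DifferentiableAt ℝ f (t, z)) (i : Fin n) :
    dp i (fun w => f (t, w)) z = pd (ep1 i) f (t, z) := by
  have h1 : HasFDerivAt (fun w : PS n => ((t, w) : E n))
      (((0 : PS n →L[ℝ] ℝ)).prod (ContinuousLinearMap.id ℝ (PS n))) z :=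
    (hasFDerivAt_const t z).prodMk (hasFDerivAt_id z)
  have h2 := hf.hasFDerivAt.comp z h1
  have h3 : HasFDerivAt (fun w => f (t, w))
      ((fderiv ℝ f (t, z)).comp
        (((0 : PS n →L[ℝ] ℝ)).prod (ContinuousLinearMap.id ℝ (PS n)))) z := h2
  rw [dp, h3.fderiv]; rfl

lemma pb_slice {F G : E n → ℂ} (hF : DifferentiableAt ℝ F (t, z))
    (hG : DifferentiableAt ℝ G (t, z)) :
    pb (fun w => F (t, w)) (fun w => G (t, w)) z = pbE F G (t, z) := by
  unfold pb pbE
  exact Finset.sum_congr rfl fun i _ => by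
    rw [dq_slice hF i, dp_slice hF i, dq_slice hG i, dp_slice hG i]

lemma rho_slice {Ψ : E n → ℂ} (hΨ : S Ψ) (ℏ : ℝ) (t : ℝ) (z : PS n) :
    rhoKvH ℏ (fun w => Ψ (t, w)) z = Rf ℏ Ψ (t, z) := by
  have hC : S (Cf Ψ) := hC_smooth hΨ
  have hG : ∀ i, S (Gf Ψ i) := hG_smooth hΨ
  have t1 : (Complex.normSq (Ψ (t, z)) : ℂ) = Df Ψ (t, z) := (Complex.mul_conj _).symm
  have t2 : ∀ i : Fin n,
      dp i (fun w => ((w.2 i : ℝ) : ℂ) * (Complex.normSq (Ψ (t, w)) : ℂ)) z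
        = pd (ep1 i) (Gf Ψ i) (t, z) := by
    intro i
    have hfun : (fun w : PS n => ((w.2 i : ℝ) : ℂ) * (Complex.normSq (Ψ (t, w)) : ℂ))
        = fun w => Gf Ψ i (t, w) := by
      funext w; simp [Gf, Df, Cf, P, Complex.mul_conj]
    rw [hfun, dp_slice ((hG i).diffAt (t, z)) i]
  have t3 : pb (fun w => Ψ (t, w)) (fun w => (starRingEnd ℂ) (Ψ (t, w))) z
      = pbE Ψ (Cf Ψ) (t, z) := pb_slice (hΨ.diffAt (t, z)) (hC.diffAt (t, z))
  simp only [rhoKvH]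
  rw [t1, t3, Finset.sum_congr rfl fun i _ => t2 i]
  rfl

end Slice

end KvHAux

/-- If `Ψ` solves the Koopman–van Hove equation, then the
momentum map `ρ := |Ψ|² + Σᵢ ∂_{pᵢ}(pᵢ|Ψ|²) + iℏ{Ψ, conj Ψ}` is real-valued
and solves the classical Liouville equation `∂ₜρ = {H, ρ}`. -/
theorem kvh_density_liouville (n : ℕ) (ℏ : ℝ) (hℏ : 0 < ℏ)
    (H : PS n → ℝ) (hH : ContDiff ℝ (⊤ : ℕ∞) H)
    (Ψ : ℝ × PS n → ℂ) (hΨ : ContDiff ℝ (⊤ : ℕ∞) Ψ)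
    (hKvH : ∀ (t : ℝ) (z : PS n),
      Complex.I * ℏ * deriv (fun s => Ψ (s, z)) t
        = Complex.I * ℏ * pb (fun w => (H w : ℂ)) (fun w => Ψ (t, w)) z
          - (((∑ i, z.2 i * dpR i H z) - H z : ℝ) : ℂ) * Ψ (t, z)) :
    ∀ (t : ℝ) (z : PS n),
      (rhoKvH ℏ (fun w => Ψ (t, w)) z).im = 0
        ∧ deriv (fun s => rhoKvH ℏ (fun w => Ψ (s, w)) z) t
            = pb (fun w => (H w : ℂ)) (fun w => rhoKvH ℏ (fun w' => Ψ (t, w')) w) z := by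
  intro t z
  have hΨ' : KvHAux.S Ψ := hΨ
  have hHE : KvHAux.S (KvHAux.HEf H) := KvHAux.hHE_smooth hH
  have hR : KvHAux.S (KvHAux.Rf ℏ Ψ) := KvHAux.hR_smooth hΨ'
  have hne : (ℏ : ℂ) ≠ 0 := Complex.ofReal_ne_zero.mpr (ne_of_gt hℏ)
  have hIb : Complex.I * (ℏ : ℂ) * (Complex.I / (ℏ : ℂ)) = -1 := by
    field_simp
    linear_combination Complex.I_mul_I
  have hLslice : ∀ (t : ℝ) (z : PS n),
      (((∑ i, z.2 i * dpR i H z) - H z : ℝ) : ℂ) = KvHAux.Lff H (t, z) := by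
    intro t z
    have hdpR : ∀ i : Fin n,
        ((dpR i H z : ℝ) : ℂ) = KvHAux.pd (KvHAux.ep1 i) (KvHAux.HEf H) (t, z) := by
      intro i
      have h1 : HasFDerivAt (fun y : KvHAux.E n => H y.2)
          ((fderiv ℝ H z).comp (ContinuousLinearMap.snd ℝ ℝ (PS n))) (t, z) :=
        ((hH.differentiable (by simp) z).hasFDerivAt).comp (t, z)
          (ContinuousLinearMap.snd ℝ ℝ (PS n)).hasFDerivAt
      have h2 : KvHAux.pd (KvHAux.ep1 i) (KvHAux.HEf H) (t, z)
          = ((fderiv ℝ (fun y : KvHAux.E n => H y.2) (t, z) (KvHAux.ep1 i) : ℝ) : ℂ) :=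
        KvHAux.pd_ofReal (((hH.comp contDiff_snd).differentiable (by simp)) (t, z)) _
      rw [h2, h1.fderiv]
      rfl
    have hsum : (∑ j, KvHAux.P j (t, z) * KvHAux.pd (KvHAux.ep1 j) (KvHAux.HEf H) (t, z))
        = ∑ j, ((z.2 j : ℂ)) * ((dpR j H z : ℝ) : ℂ) :=
      Finset.sum_congr rfl fun j _ => by rw [← hdpR j]; rfl
    show _ = (∑ j, KvHAux.P j (t, z) * KvHAux.pd (KvHAux.ep1 j) (KvHAux.HEf H) (t, z))
        - KvHAux.HEf H (t, z)
    rw [hsum]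
    push_cast
    rfl
  have hkvE : ∀ x : KvHAux.E n, KvHAux.pd KvHAux.et Ψ x
      = KvHAux.pbE (KvHAux.HEf H) Ψ x + (Complex.I / (ℏ : ℂ)) * (KvHAux.Lff H x * Ψ x) := by
    intro x
    obtain ⟨t, z⟩ := x
    have h0 := hKvH t z
    rw [KvHAux.deriv_slice (hΨ'.diffAt (t, z))] at h0
    have hpb : pb (fun w => ((H w : ℝ) : ℂ)) (fun w => Ψ (t, w)) z
        = KvHAux.pbE (KvHAux.HEf H) Ψ (t, z) :=
      KvHAux.pb_slice (hHE.diffAt (t, z)) (hΨ'.diffAt (t, z))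
    rw [hpb, hLslice t z] at h0
    refine mul_left_cancel₀ (mul_ne_zero Complex.I_ne_zero hne) ?_
    rw [← mul_assoc, h0]
    linear_combination (-(KvHAux.Lff H (t, z) * Ψ (t, z))) * hIb
  refine ⟨?_, ?_⟩
  · rw [KvHAux.rho_slice hΨ' ℏ t z]
    exact KvHAux.main_real hΨ' ℏ (t, z)
  · have e1 : (fun s => rhoKvH ℏ (fun w => Ψ (s, w)) z) = fun s => KvHAux.Rf ℏ Ψ (s, z) :=
      funext fun s => KvHAux.rho_slice hΨ' ℏ s z
    have e2 : (fun w => rhoKvH ℏ (fun w' => Ψ (t, w')) w) = fun w => KvHAux.Rf ℏ Ψ (t, w) :=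
      funext fun w => KvHAux.rho_slice hΨ' ℏ t w
    rw [e1, e2, KvHAux.deriv_slice (hR.diffAt (t, z))]
    have e3 : pb (fun w => ((H w : ℝ) : ℂ)) (fun w => KvHAux.Rf ℏ Ψ (t, w)) z
        = KvHAux.pbE (KvHAux.HEf H) (KvHAux.Rf ℏ Ψ) (t, z) :=
      KvHAux.pb_slice (hHE.diffAt (t, z)) (hR.diffAt (t, z))
    rw [e3]
    exact KvHAux.main_evol (ne_of_gt hℏ) hΨ' hH hkvE (t, z)
end
end

section
/- Equivariance of the covariant Liouvillian under strict contact transformations: let η : ℝ²ⁿ → ℝ²ⁿ be a smooth diffeomorphism and φ : ℝ²ⁿ → ℝ a smooth function satisfying η*𝒜 + dφ = 𝒜, i.e. for every z ∈ ℝ²ⁿ and every tangent vector v ∈ ℝ²ⁿ, 𝒜_{η(z)}(Dη(z)v) + Dφ(z)v = 𝒜_z(v). For smooth Ψ : ℝ²ⁿ → ℂ define (UΨ)(z) := Ψ(η⁻¹(z)) · exp(−i φ(η⁻¹(z))/ħ). Then for every smooth H : ℝ²ⁿ → ℝ and every smooth Ψ one has L̂_H(UΨ) = U(L̂_{H∘η}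 Ψ). -/
open Complex

noncomputable section

variable {n : ℕ}

/-- The canonical one-form `𝒜_z(δq, δp) = Σᵢ pᵢ δqⁱ` on phase space. -/
noncomputable def Acan (z v : PS n) : ℝ := ∑ i, z.2 i * v.1 i

lemma clm_expand {F : Type*} [NormedAddCommGroup F] [NormedSpace ℝ F]
    (L : PS n →L[ℝ] F) (v : PS n) :
    L v = (∑ i, v.1 i • L ((Pi.single i 1 : Fin n → ℝ), 0))
        + ∑ i, v.2 i • L (0, (Pi.single i 1 : Fin n → ℝ)) := by
  have h1 : v = (∑ i, v.1 i • (((Pi.single i 1 : Fin n → ℝ), (0 : Fin n → ℝ)) : PS n))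
      + ∑ i, v.2 i • (((0 : Fin n → ℝ), (Pi.single i 1 : Fin n → ℝ)) : PS n) := by
    apply Prod.ext
    · funext j
      simp [Prod.fst_sum, Finset.sum_apply, Pi.single_apply]
    · funext j
      simp [Prod.snd_sum, Finset.sum_apply, Pi.single_apply]
  conv_lhs => rw [h1]
  rw [map_add, map_sum, map_sum]
  congr 1
  · refine Finset.sum_congr rfl fun i _ => ?_
    rw [← L.map_smul, Prod.smul_mk, smul_zero]
  · refine Finset.sum_congr rfl fun i _ => ?_
    rw [← L.map_smul, Prod.smul_mk, smul_zero]

/-- The (sign-reversed) Hamiltonian vector field. -/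
noncomputable def vHam (K : PS n → ℝ) (z : PS n) : PS n :=
  (fun i => -(dpR i K z), fun i => dqR i K z)

/-- Symplectic pairing. -/
noncomputable def omeg (u v : PS n) : ℝ := ∑ i, (u.2 i * v.1 i - v.2 i * u.1 i)

lemma fderivR_eq (f : PS n → ℝ) (z v : PS n) :
    fderiv ℝ f z v = (∑ i, v.1 i * dqR i f z) + ∑ i, v.2 i * dpR i f z := by
  simpa [dqR, dpR, smul_eq_mul] using clm_expand (fderiv ℝ f z) v

lemma omeg_vHam (K : PS n → ℝ) (z v : PS n) :
    omeg (vHam K z) v = fderiv ℝ K z v := by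
  rw [fderivR_eq, omeg, ← Finset.sum_add_distrib]
  refine Finset.sum_congr rfl fun i _ => ?_
  simp [vHam]; ring

lemma omeg_cancel {a b : PS n} (h : ∀ v, omeg a v = omeg b v) : a = b := by
  apply Prod.ext
  · funext i
    have h1 := h (0, Pi.single i 1)
    simp [omeg, Pi.single_apply] at h1
    linarith
  · funext i
    have h2 := h (Pi.single i 1, 0)
    simp [omeg, Pi.single_apply] at h2
    linarith

lemma pb_eq (K : PS n → ℝ) (hK : Differentiable ℝ K) (Ψ : PS n → ℂ) (z : PS n) :
    pb (fun w => (K w : ℂ)) Ψ z = fderiv ℝ Ψ z (vHam K z) := by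
  have hfd : fderiv ℝ (fun w => ((K w : ℂ))) z = Complex.ofRealCLM.comp (fderiv ℝ K z) :=
    (Complex.ofRealCLM.hasFDerivAt.comp z (hK z).hasFDerivAt).fderiv
  rw [clm_expand (fderiv ℝ Ψ z) (vHam K z), pb, ← Finset.sum_add_distrib]
  refine Finset.sum_congr rfl fun i _ => ?_
  simp only [dq, dp, hfd, ContinuousLinearMap.comp_apply, Complex.ofRealCLM_apply, vHam,
    Complex.real_smul]
  push_cast [dqR, dpR]
  ring

lemma sum_dpR (K : PS n → ℝ) (z : PS n) :
    ∑ i, z.2 i * dpR i K z = -Acan z (vHam K z) := by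
  simp [Acan, vHam, mul_neg, Finset.sum_neg_distrib]

lemma symplecto (η : PS n → PS n) (hη : ContDiff ℝ (⊤ : ℕ∞) η)
    (φ : PS n → ℝ) (hφ : ContDiff ℝ (⊤ : ℕ∞) φ)
    (hcontact : ∀ z v, Acan (η z) (fderiv ℝ η z v) + fderiv ℝ φ z v = Acan z v)
    (z u v : PS n) :
    omeg (fderiv ℝ η z u) (fderiv ℝ η z v) = omeg u v := by
  have hηd : Differentiable ℝ η := hη.differentiable (by simp)
  have hη' : Differentiable ℝ (fderiv ℝ η) := (hη.fderiv_right (m := (⊤:ℕ∞)) (by exact_mod_cast le_top)).differentiable (by simp)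
  have hφd : Differentiable ℝ φ := hφ.differentiable (by simp)
  have hφ' : Differentiable ℝ (fderiv ℝ φ) := (hφ.fderiv_right (m := (⊤:ℕ∞)) (by exact_mod_cast le_top)).differentiable (by simp)
  set η'' := fderiv ℝ (fderiv ℝ η) z with hη''
  set φ'' := fderiv ℝ (fderiv ℝ φ) z with hφ''
  have key : ∀ u v : PS n,
      (∑ i, ((η z).2 i * ((η'' u) v).1 i + (fderiv ℝ η z v).1 i * (fderiv ℝ η z u).2 i))
        + (φ'' u) v = ∑ i, v.1 i * u.2 i := by
    intro u v
    -- derivative of each factor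
    have hgi : ∀ i : Fin n, HasFDerivAt (fun w => (η w).2 i)
        (((ContinuousLinearMap.proj i).comp
          (ContinuousLinearMap.snd ℝ (Fin n → ℝ) (Fin n → ℝ))).comp (fderiv ℝ η z)) z := by
      intro i
      exact (((ContinuousLinearMap.proj i).comp
        (ContinuousLinearMap.snd ℝ (Fin n → ℝ) (Fin n → ℝ))).hasFDerivAt).comp z
        (hηd z).hasFDerivAt
    have hhi : ∀ i : Fin n, HasFDerivAt (fun w => (fderiv ℝ η w v).1 i)
        ((((ContinuousLinearMap.proj i).comp
            (ContinuousLinearMap.fst ℝ (Fin n → ℝ) (Fin n → ℝ))).comp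
          (ContinuousLinearMap.apply ℝ (PS n) v)).comp η'') z := by
      intro i
      have h1 : HasFDerivAt (fun w => fderiv ℝ η w) η'' z := (hη' z).hasFDerivAt
      exact ((((ContinuousLinearMap.proj i).comp
        (ContinuousLinearMap.fst ℝ (Fin n → ℝ) (Fin n → ℝ))).comp
          (ContinuousLinearMap.apply ℝ (PS n) v)).hasFDerivAt).comp z h1
    have hsum : HasFDerivAt (fun w => ∑ i, (η w).2 i * (fderiv ℝ η w v).1 i)
        (∑ i, ((η z).2 i • ((((ContinuousLinearMap.proj i).comp
            (ContinuousLinearMap.fst ℝ (Fin n → ℝ) (Fin n → ℝ))).comp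
          (ContinuousLinearMap.apply ℝ (PS n) v)).comp η'')
          + (fderiv ℝ η z v).1 i • (((ContinuousLinearMap.proj i).comp
          (ContinuousLinearMap.snd ℝ (Fin n → ℝ) (Fin n → ℝ))).comp (fderiv ℝ η z)))) z :=
      HasFDerivAt.fun_sum fun i _ => (hgi i).mul (hhi i)
    have hφv : HasFDerivAt (fun w => fderiv ℝ φ w v)
        ((ContinuousLinearMap.apply ℝ ℝ v).comp φ'') z :=
      ((ContinuousLinearMap.apply ℝ ℝ v).hasFDerivAt).comp z (hφ' z).hasFDerivAt
    have hLHS := hsum.fun_add hφv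
    -- the right-hand side is linear
    set Lv : PS n →L[ℝ] ℝ := ∑ i, v.1 i • ((ContinuousLinearMap.proj i).comp
      (ContinuousLinearMap.snd ℝ (Fin n → ℝ) (Fin n → ℝ))) with hLv
    have hfun : (fun w => (∑ i, (η w).2 i * (fderiv ℝ η w v).1 i) + fderiv ℝ φ w v)
        = fun w => Lv w := by
      funext x
      have hc := hcontact x v
      simp only [Acan] at hc
      rw [hc, hLv]
      simp [mul_comm]
    rw [hfun] at hLHS
    have hD := hLHS.unique Lv.hasFDerivAt
    have := ContinuousLinearMap.ext_iff.mp hD u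
    rw [hLv] at this
    simpa [Finset.sum_add_distrib, mul_comm] using this
  have k1 := key u v
  have k2 := key v u
  have hsymη : (η'' u) v = (η'' v) u :=
    second_derivative_symmetric (fun y => (hηd y).hasFDerivAt) (hη' z).hasFDerivAt u v
  have hsymφ : (φ'' u) v = (φ'' v) u :=
    second_derivative_symmetric (fun y => (hφd y).hasFDerivAt) (hφ' z).hasFDerivAt u v
  rw [Finset.sum_add_distrib] at k1 k2
  have e1 : ∑ i, (η z).2 i * ((η'' u) v).1 i = ∑ i, (η z).2 i * ((η'' v) u).1 i := by
    rw [hsymη]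
  simp only [omeg, Finset.sum_sub_distrib]
  have c1 : ∑ i, (fderiv ℝ η z u).2 i * (fderiv ℝ η z v).1 i
      = ∑ i, (fderiv ℝ η z v).1 i * (fderiv ℝ η z u).2 i :=
    Finset.sum_congr rfl fun i _ => mul_comm _ _
  have c2 : ∑ i, (fderiv ℝ η z v).2 i * (fderiv ℝ η z u).1 i
      = ∑ i, (fderiv ℝ η z u).1 i * (fderiv ℝ η z v).2 i :=
    Finset.sum_congr rfl fun i _ => mul_comm _ _
  have c3 : ∑ i, u.2 i * v.1 i = ∑ i, v.1 i * u.2 i :=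
    Finset.sum_congr rfl fun i _ => mul_comm _ _
  have c4 : ∑ i, v.2 i * u.1 i = ∑ i, u.1 i * v.2 i :=
    Finset.sum_congr rfl fun i _ => mul_comm _ _
  rw [c1, c2, c3, c4]
  linarith

lemma inv_deriv (η ηinv : PS n → PS n) (hη : ContDiff ℝ (⊤ : ℕ∞) η)
    (hηinv : ContDiff ℝ (⊤ : ℕ∞) ηinv) (hri : Function.RightInverse ηinv η)
    (z v : PS n) : fderiv ℝ η (ηinv z) (fderiv ℝ ηinv z v) = v := by
  have hc : fderiv ℝ (η ∘ ηinv) z = (fderiv ℝ η (ηinv z)).comp (fderiv ℝ ηinv z) :=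
    fderiv_comp z (hη.differentiable (by simp) (ηinv z))
      (hηinv.differentiable (by simp) z)
  have hid : η ∘ ηinv = id := funext hri
  rw [hid, fderiv_id] at hc
  have h2 := ContinuousLinearMap.ext_iff.mp hc v
  simpa using h2.symm

lemma push_vHam (η ηinv : PS n → PS n) (hη : ContDiff ℝ (⊤ : ℕ∞) η)
    (hηinv : ContDiff ℝ (⊤ : ℕ∞) ηinv)
    (hli : Function.LeftInverse ηinv η) (hri : Function.RightInverse ηinv η)
    (φ : PS n → ℝ) (hφ : ContDiff ℝ (⊤ : ℕ∞) φ)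
    (hcontact : ∀ z v, Acan (η z) (fderiv ℝ η z v) + fderiv ℝ φ z v = Acan z v)
    (H : PS n → ℝ) (hH : ContDiff ℝ (⊤ : ℕ∞) H) (w : PS n) :
    fderiv ℝ η w (vHam (fun x => H (η x)) w) = vHam H (η w) := by
  apply omeg_cancel
  intro v'
  have hsur : fderiv ℝ η w (fderiv ℝ ηinv (η w) v') = v' := by
    have h := inv_deriv η ηinv hη hηinv hri (η w) v'
    rwa [hli w] at h
  set v := fderiv ℝ ηinv (η w) v' with hv
  have hchain : fderiv ℝ (fun x => H (η x)) w = (fderiv ℝ H (η w)).comp (fderiv ℝ η w) := by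
    rw [show (fun x => H (η x)) = H ∘ η from rfl]
    exact fderiv_comp w (hH.differentiable (by simp) (η w))
      (hη.differentiable (by simp) w)
  calc omeg (fderiv ℝ η w (vHam (fun x => H (η x)) w)) v'
      = omeg (fderiv ℝ η w (vHam (fun x => H (η x)) w)) (fderiv ℝ η w v) := by rw [hsur]
    _ = omeg (vHam (fun x => H (η x)) w) v := symplecto η hη φ hφ hcontact w _ v
    _ = fderiv ℝ (fun x => H (η x)) w v := omeg_vHam _ w v
    _ = fderiv ℝ H (η w) (fderiv ℝ η w v) := by rw [hchain]; rfl
    _ = fderiv ℝ H (η w) v' := by rw [hsur]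
    _ = omeg (vHam H (η w)) v' := (omeg_vHam H (η w) v').symm

/-- Equivariance of the covariant Liouvillian under strict
contact transformations: if `η*𝒜 + dφ = 𝒜` and
`(UΨ)(z) = Ψ(η⁻¹ z) exp(−iφ(η⁻¹ z)/ℏ)`, then `L̂_H (UΨ) = U (L̂_{H∘η} Ψ)`. -/
theorem liouvillian_contact_equivariance (n : ℕ) (ℏ : ℝ) (hℏ : 0 < ℏ)
    (η ηinv : PS n → PS n)
    (hη : ContDiff ℝ (⊤ : ℕ∞) η) (hηinv : ContDiff ℝ (⊤ : ℕ∞) ηinv)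
    (hli : Function.LeftInverse ηinv η) (hri : Function.RightInverse ηinv η)
    (φ : PS n → ℝ) (hφ : ContDiff ℝ (⊤ : ℕ∞) φ)
    (hcontact : ∀ z v, Acan (η z) (fderiv ℝ η z v) + fderiv ℝ φ z v = Acan z v)
    (H : PS n → ℝ) (hH : ContDiff ℝ (⊤ : ℕ∞) H)
    (Ψ : PS n → ℂ) (hΨ : ContDiff ℝ (⊤ : ℕ∞) Ψ) :
    ∀ z, Liouv ℏ H
        (fun w => Ψ (ηinv w) * Complex.exp (-(Complex.I * φ (ηinv w) / ℏ))) z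
      = Liouv ℏ (fun w => H (η w)) Ψ (ηinv z)
          * Complex.exp (-(Complex.I * φ (ηinv z) / ℏ)) := by
  intro z
  have hηd : Differentiable ℝ η := hη.differentiable (by simp)
  have hηinvd : Differentiable ℝ ηinv := hηinv.differentiable (by simp)
  have hφd : Differentiable ℝ φ := hφ.differentiable (by simp)
  have hHd : Differentiable ℝ H := hH.differentiable (by simp)
  have hΨd : Differentiable ℝ Ψ := hΨ.differentiable (by simp)
  set w := ηinv z with hw
  have hz : η w = z := hri z
  set u : PS n := vHam (fun x => H (η x)) w with hu
  -- exponential factor and its derivative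
  set e : ℂ := Complex.exp (-(Complex.I * (φ w : ℂ) / (ℏ : ℂ))) with he
  have hφw : HasFDerivAt (fun x : PS n => -(Complex.I * (φ x : ℂ) / (ℏ : ℂ)))
      ((-(Complex.I / (ℏ:ℂ))) • (Complex.ofRealCLM.comp (fderiv ℝ φ w))) w := by
    have h0 : HasFDerivAt (fun x : PS n => ((φ x : ℂ)))
        (Complex.ofRealCLM.comp (fderiv ℝ φ w)) w :=
      Complex.ofRealCLM.hasFDerivAt.comp w (hφd w).hasFDerivAt
    have heq : (fun x : PS n => -(Complex.I * (φ x : ℂ) / (ℏ:ℂ)))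
        = (fun x : PS n => (-(Complex.I / (ℏ:ℂ))) * (φ x : ℂ)) := by
      funext x; ring
    rw [heq]
    simpa [smul_smul] using h0.const_mul (-(Complex.I / (ℏ:ℂ)))
  have hexp : HasFDerivAt (fun x : PS n => Complex.exp (-(Complex.I * (φ x : ℂ) / (ℏ:ℂ))))
      (e • ((-(Complex.I / (ℏ:ℂ))) • (Complex.ofRealCLM.comp (fderiv ℝ φ w)))) w := by
    simpa [he] using hφw.cexp
  have hG : HasFDerivAt (fun x : PS n => Ψ x * Complex.exp (-(Complex.I * (φ x : ℂ) / (ℏ:ℂ))))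
      (Ψ w • (e • ((-(Complex.I / (ℏ:ℂ))) • (Complex.ofRealCLM.comp (fderiv ℝ φ w))))
        + e • fderiv ℝ Ψ w) w :=
    (hΨd w).hasFDerivAt.mul hexp
  -- derivative of the transformed wavefunction
  have hfUΨ : fderiv ℝ (fun w' => Ψ (ηinv w') * Complex.exp
        (-(Complex.I * (φ (ηinv w') : ℂ) / (ℏ:ℂ)))) z
      = ((Ψ w • (e • ((-(Complex.I / (ℏ:ℂ))) • (Complex.ofRealCLM.comp (fderiv ℝ φ w))))
        + e • fderiv ℝ Ψ w)).comp (fderiv ℝ ηinv z) := by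
    rw [show (fun w' => Ψ (ηinv w') * Complex.exp (-(Complex.I * (φ (ηinv w') : ℂ) / (ℏ:ℂ))))
        = (fun x : PS n => Ψ x * Complex.exp (-(Complex.I * (φ x : ℂ) / (ℏ:ℂ)))) ∘ ηinv from rfl]
    rw [fderiv_comp z hG.differentiableAt (hηinvd z), hG.fderiv]
  -- transport of the Hamiltonian vector field
  have hpush : fderiv ℝ η w u = vHam H z := by
    rw [hu, push_vHam η ηinv hη hηinv hli hri φ hφ hcontact H hH w, hz]
  have hpull : fderiv ℝ ηinv z (vHam H z) = u := by
    have h := inv_deriv ηinv η hηinv hη hli w u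
    rwa [hz, hpush] at h
  -- scalar abbreviations
  set a : ℂ := fderiv ℝ Ψ w u with ha
  set d : ℝ := fderiv ℝ φ w u with hd
  set A1 : ℝ := Acan z (vHam H z) with hA1
  set A2 : ℝ := Acan w u with hA2
  have hdval : d = A2 - A1 := by
    have h := hcontact w u
    rw [hpush, hz] at h
    rw [hd, hA1, hA2]; linarith
  -- compute both Poisson brackets
  have hpb1 : pb (fun x => (H x : ℂ))
      (fun w' => Ψ (ηinv w') * Complex.exp (-(Complex.I * (φ (ηinv w') : ℂ) / (ℏ:ℂ)))) z
      = Ψ w * (e * ((-(Complex.I / (ℏ:ℂ))) * (d : ℂ))) + e * a := by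
    rw [pb_eq H hHd _ z, hfUΨ]
    simp only [ContinuousLinearMap.comp_apply, hpull, ContinuousLinearMap.add_apply,
      ContinuousLinearMap.smul_apply, Complex.ofRealCLM_apply, smul_eq_mul, ← ha, ← hd]
  have hpb2 : pb (fun x => ((H (η x) : ℝ) : ℂ)) Ψ w = a := by
    rw [pb_eq (fun x => H (η x)) (hHd.comp hηd) Ψ w, ← hu, ha]
  -- the momentum sums
  have hs1 : ∑ i, z.2 i * dpR i H z = -A1 := by rw [hA1]; exact sum_dpR H z
  have hs2 : ∑ i, w.2 i * dpR i (fun x => H (η x)) w = -A2 := by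
    rw [hA2, hu]; exact sum_dpR _ w
  -- finish by algebra
  have hℏ0 : ((ℏ:ℝ) : ℂ) ≠ 0 := by exact_mod_cast hℏ.ne'
  simp only [Liouv, hpb1, hpb2, hs1, hs2]
  rw [show H (η w) = H z from by rw [hz]]
  simp only [← hw, ← he]
  push_cast [hdval]
  field_simp
  linear_combination (-(Ψ w * e * ((A2 : ℂ) - (A1 : ℂ)))) * Complex.I_sq
end
end

section
/- Remarkable algebraic relation for hybrid Liouvillians (finite-dimensional quantum sector, componentwise form): let Â, B̂ : ℝ²ⁿ → Mₖ(ℂ) be smooth with Â(z), B̂(z) Hermitian for every z, and let Ā, B̄ denote their entrywise complex conjugates. Then for every smooth ψ : ℝ²ⁿ → ℂ and all indices a, b ∈ {1,…,k}: ([L̂_Â, L̂_B̂](ψ e_b))_a + ([L̂_Ā, L̂_B̄](ψ e_a))_b = iħ (L̂_{{Â,B̂} − {B̂,Â}}(ψ e_b))_a, where [L̂_Â, L̂_B̂] := L̂_Â ∘ L̂_B̂ − L̂_B̂ ∘ L̂_Â, e_a is the a-th standard basis vector of ℂᵏ, and {Â,B̂} := Σᵢ (∂_{qⁱ}Â ·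 ∂_{pᵢ}B̂ − ∂_{pᵢ}Â · ∂_{qⁱ}B̂) with matrix products. -/
open Complex

noncomputable section

variable {n : ℕ}

variable {k : ℕ}

/-- The hybrid Liouvillian `L̂_Â` for an `Mₖ(ℂ)`-valued observable `A` (encoded
componentwise), acting on `ℂᵏ`-valued wavefunctions:
`L̂_Â Υ := iℏ Σᵢ (∂_{qⁱ}Â ∂_{pᵢ}Υ − ∂_{pᵢ}Â ∂_{qⁱ}Υ) + (Â − Σᵢ pᵢ ∂_{pᵢ}Â) Υ`. -/
noncomputable def LHyb (ℏ : ℝ) (A : PS n → Fin k → Fin k → ℂ)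
    (Υ : PS n → Fin k → ℂ) (z : PS n) (a : Fin k) : ℂ :=
  Complex.I * ℏ * ∑ i, ∑ b, (dq i (fun w => A w a b) z * dp i (fun w => Υ w b) z
      - dp i (fun w => A w a b) z * dq i (fun w => Υ w b) z)
    + ∑ b, (A z a b - ∑ i, (z.2 i : ℂ) * dp i (fun w => A w a b) z) * Υ z b

/-- Matrix-valued canonical Poisson bracket
`{A,B} := Σᵢ (∂_{qⁱ}A · ∂_{pᵢ}B − ∂_{pᵢ}A · ∂_{qⁱ}B)` with matrix products. -/
noncomputable def mpb (A B : PS n → Fin k → Fin k → ℂ) (z : PS n) (a b : Fin k) : ℂ :=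
  ∑ i, ∑ c, (dq i (fun w => A w a c) z * dp i (fun w => B w c b) z
    - dp i (fun w => A w a c) z * dq i (fun w => B w c b) z)

noncomputable def Dv (v : PS n) (f : PS n → ℂ) (z : PS n) : ℂ := fderiv ℝ f z v

lemma Dv_smooth (v : PS n) {f : PS n → ℂ} (hf : ContDiff ℝ (⊤ : ℕ∞) f) :
    ContDiff ℝ (⊤ : ℕ∞) (Dv v f) := by
  have h1 : ContDiff ℝ (⊤ : ℕ∞) (fderiv ℝ f) := hf.fderiv_right (by exact_mod_cast le_top)
  exact h1.clm_apply contDiff_const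

lemma Dv_clairaut {f : PS n → ℂ} (hf : ContDiff ℝ (⊤ : ℕ∞) f) (u v : PS n) (z : PS n) :
    Dv u (Dv v f) z = Dv v (Dv u f) z := by
  have hsymm : ∀ a b : PS n, fderiv ℝ (fderiv ℝ f) z a b = fderiv ℝ (fderiv ℝ f) z b a := by
    have := (hf.contDiffAt (x := z)).isSymmSndFDerivAt (n := ((⊤:ℕ∞) : WithTop ℕ∞))
      (by rw [minSmoothness_of_isRCLikeNormedField]; exact WithTop.coe_le_coe.mpr le_top)
    exact this
  have hder : DifferentiableAt ℝ (fderiv ℝ f) z :=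
    ((hf.fderiv_right (m := (⊤:ℕ∞)) (by exact_mod_cast le_top)).differentiable (by norm_cast)) z
  have key : ∀ w : PS n, Dv w (Dv v f) z = fderiv ℝ (fderiv ℝ f) z w v := by
    intro w
    have : Dv v f = fun y => (fderiv ℝ f y) v := rfl
    rw [Dv, this, fderiv_clm_apply hder (differentiableAt_const v)]
    simp
  rw [key u, hsymm]
  -- now need: fderiv (fderiv f) z v u = Dv v (Dv u f) z
  have : Dv u f = fun y => (fderiv ℝ f y) u := rfl
  rw [Dv, this, fderiv_clm_apply hder (differentiableAt_const u)]
  simp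

-- abbreviation for the relevant smoothness class
def Sm {n : ℕ} (f : PS n → ℂ) : Prop := ContDiff ℝ (⊤ : ℕ∞) f

lemma dat {f : PS n → ℂ} (hf : ContDiff ℝ (⊤ : ℕ∞) f) (z : PS n) : DifferentiableAt ℝ f z :=
  (hf.differentiable (by norm_cast)) z

lemma Dv_add {f g : PS n → ℂ} (v z : PS n) (hf : DifferentiableAt ℝ f z)
    (hg : DifferentiableAt ℝ g z) :
    Dv v (fun w => f w + g w) z = Dv v f z + Dv v g z := by
  simp [Dv, fderiv_fun_add hf hg]

lemma Dv_sub {f g : PS n → ℂ} (v z : PS n) (hf : DifferentiableAt ℝ f z)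
    (hg : DifferentiableAt ℝ g z) :
    Dv v (fun w => f w - g w) z = Dv v f z - Dv v g z := by
  simp [Dv, fderiv_fun_sub hf hg]

lemma Dv_mul {f g : PS n → ℂ} (v z : PS n) (hf : DifferentiableAt ℝ f z)
    (hg : DifferentiableAt ℝ g z) :
    Dv v (fun w => f w * g w) z = Dv v f z * g z + f z * Dv v g z := by
  simp [Dv, fderiv_fun_mul hf hg, smul_eq_mul]; ring

lemma Dv_const (v z : PS n) (c : ℂ) : Dv v (fun _ => c) z = 0 := by
  simp [Dv]

lemma Dv_const_mul {f : PS n → ℂ} (v z : PS n) (c : ℂ) (hf : DifferentiableAt ℝ f z) :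
    Dv v (fun w => c * f w) z = c * Dv v f z := by
  simp [Dv, fderiv_const_mul hf, smul_eq_mul]

lemma Dv_sum {m : ℕ} {F : Fin m → PS n → ℂ} (v z : PS n)
    (hF : ∀ i, DifferentiableAt ℝ (F i) z) :
    Dv v (fun w => ∑ i, F i w) z = ∑ i, Dv v (F i) z := by
  simp [Dv, fderiv_fun_sum (fun i _ => hF i)]

-- the coordinate function w ↦ (w.2 i : ℂ) as a CLM
noncomputable def coordP (i : Fin n) : PS n →L[ℝ] ℂ :=
  Complex.ofRealCLM.comp ((ContinuousLinearMap.proj i).comp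
    (ContinuousLinearMap.snd ℝ (Fin n → ℝ) (Fin n → ℝ)))

lemma coordP_apply (i : Fin n) (w : PS n) : coordP i w = ((w.2 i : ℝ) : ℂ) := rfl

lemma Dv_coord (i : Fin n) (v z : PS n) :
    Dv v (fun w : PS n => ((w.2 i : ℝ) : ℂ)) z = ((v.2 i : ℝ) : ℂ) := by
  have : (fun w : PS n => ((w.2 i : ℝ) : ℂ)) = coordP i := rfl
  rw [Dv, this, (coordP i).fderiv]; rfl

lemma sm_coord (i : Fin n) : Sm (fun w : PS n => ((w.2 i : ℝ) : ℂ)) := by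
  have : (fun w : PS n => ((w.2 i : ℝ) : ℂ)) = coordP i := rfl
  rw [Sm, this]; exact (coordP i).contDiff

noncomputable def eQ (i : Fin n) : PS n := (Pi.single i 1, 0)
noncomputable def eP (i : Fin n) : PS n := (0, Pi.single i 1)

lemma dq_eq (i : Fin n) (f : PS n → ℂ) : dq i f = Dv (eQ i) f := rfl
lemma dp_eq (i : Fin n) (f : PS n → ℂ) : dp i f = Dv (eP i) f := rfl

lemma Sm.dq {f : PS n → ℂ} (hf : Sm f) (i : Fin n) : Sm (dq i f) := Dv_smooth _ hf
lemma Sm.dp {f : PS n → ℂ} (hf : Sm f) (i : Fin n) : Sm (dp i f) := Dv_smooth _ hf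

-- Clairaut specializations
lemma cl_qq {f : PS n → ℂ} (hf : Sm f) (i j : Fin n) (z : PS n) :
    dq i (dq j f) z = dq j (dq i f) z := Dv_clairaut hf _ _ z
lemma cl_pp {f : PS n → ℂ} (hf : Sm f) (i j : Fin n) (z : PS n) :
    dp i (dp j f) z = dp j (dp i f) z := Dv_clairaut hf _ _ z
lemma cl_pq {f : PS n → ℂ} (hf : Sm f) (i j : Fin n) (z : PS n) :
    dp i (dq j f) z = dq j (dp i f) z := Dv_clairaut hf _ _ z
lemma cl_qp {f : PS n → ℂ} (hf : Sm f) (i j : Fin n) (z : PS n) :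
    dq i (dp j f) z = dp j (dq i f) z := Dv_clairaut hf _ _ z

noncomputable def mop (f : PS n → ℂ) (z : PS n) : ℂ :=
  f z - ∑ i, (z.2 i : ℂ) * dp i f z

noncomputable def lop (ℏ : ℝ) (f u : PS n → ℂ) (z : PS n) : ℂ :=
  Complex.I * ℏ * pb f u z + mop f z * u z

lemma sm_pb {f g : PS n → ℂ} (hf : Sm f) (hg : Sm g) : Sm (pb f g) := by
  show ContDiff ℝ (⊤:ℕ∞) fun z => ∑ i, (dq i f z * dp i g z - dp i f z * dq i g z)
  exact ContDiff.sum fun i _ => ((hf.dq i).mul (hg.dp i)).sub ((hf.dp i).mul (hg.dq i))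

lemma sm_mop {f : PS n → ℂ} (hf : Sm f) : Sm (mop f) := by
  show ContDiff ℝ (⊤:ℕ∞) fun z => f z - ∑ i, (z.2 i : ℂ) * dp i f z
  exact hf.sub (ContDiff.sum fun i _ => (sm_coord i).mul (hf.dp i))

lemma sm_lop {ℏ : ℝ} {f u : PS n → ℂ} (hf : Sm f) (hu : Sm u) : Sm (lop ℏ f u) := by
  show ContDiff ℝ (⊤:ℕ∞) fun z => Complex.I * ℏ * pb f u z + mop f z * u z
  exact (contDiff_const.mul (sm_pb hf hu)).add ((sm_mop hf).mul hu)

lemma Dv_pb {g u : PS n → ℂ} (hg : Sm g) (hu : Sm u) (v z : PS n) :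
    Dv v (pb g u) z = ∑ i, (Dv v (dq i g) z * dp i u z + dq i g z * Dv v (dp i u) z
      - (Dv v (dp i g) z * dq i u z + dp i g z * Dv v (dq i u) z)) := by
  have h1 : pb g u = fun w => ∑ i, (dq i g w * dp i u w - dp i g w * dq i u w) := rfl
  rw [h1, Dv_sum v z (fun i => (dat (((hg.dq i).mul (hu.dp i)).sub ((hg.dp i).mul (hu.dq i))) z))]
  refine Finset.sum_congr rfl fun i _ => ?_
  rw [Dv_sub v z ((dat ((hg.dq i).mul (hu.dp i)) z)) ((dat ((hg.dp i).mul (hu.dq i)) z)),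
    Dv_mul v z ((dat (hg.dq i) z)) ((dat (hu.dp i) z)),
    Dv_mul v z ((dat (hg.dp i) z)) ((dat (hu.dq i) z))]

lemma Dv_mop {g : PS n → ℂ} (hg : Sm g) (v z : PS n) :
    Dv v (mop g) z = Dv v g z
      - ∑ i, (((v.2 i : ℝ) : ℂ) * dp i g z + (z.2 i : ℂ) * Dv v (dp i g) z) := by
  have h1 : mop g = fun w => g w - ∑ i, ((w.2 i : ℝ) : ℂ) * dp i g w := rfl
  rw [h1, Dv_sub v z (dat hg z)
    ((dat (ContDiff.sum fun i _ => (sm_coord i).mul (hg.dp i)) z)),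
    Dv_sum v z (fun i => (dat (((sm_coord i).mul (hg.dp i))) z))]
  congr 1
  refine Finset.sum_congr rfl fun i _ => ?_
  rw [Dv_mul v z ((dat (sm_coord i) z)) ((dat (hg.dp i) z)), Dv_coord]

lemma Dv_lop {ℏ : ℝ} {g u : PS n → ℂ} (hg : Sm g) (hu : Sm u) (v z : PS n) :
    Dv v (lop ℏ g u) z = Complex.I * ℏ * Dv v (pb g u) z
      + (Dv v (mop g) z * u z + mop g z * Dv v u z) := by
  have h1 : lop ℏ g u = fun w => Complex.I * ℏ * pb g u w + mop g w * u w := rfl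
  rw [h1, Dv_add v z ((dat (contDiff_const.mul (sm_pb hg hu)) z)) ((dat ((sm_mop hg).mul hu) z)),
    Dv_const_mul v z _ ((dat (sm_pb hg hu) z)),
    Dv_mul v z ((dat (sm_mop hg) z)) (dat hu z)]

lemma single_sum (i : Fin n) (X : Fin n → ℂ) :
    ∑ j, ((Pi.single (M := fun _ : Fin n => ℝ) i 1 j : ℝ) : ℂ) * X j = X i := by
  rw [Finset.sum_eq_single i]
  · simp
  · intro j _ hj; simp [Pi.single_apply, hj]
  · intro h; exact absurd (Finset.mem_univ i) h

lemma dp_mop {g : PS n → ℂ} (hg : Sm g) (i : Fin n) (z : PS n) :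
    dp i (mop g) z = - ∑ j, (z.2 j : ℂ) * dp i (dp j g) z := by
  rw [dp_eq, Dv_mop hg]
  rw [Finset.sum_add_distrib]
  have h2 : ∀ j, (((eP i).2 j : ℝ) : ℂ)
      = ((Pi.single (M := fun _ : Fin n => ℝ) i 1 j : ℝ) : ℂ) := fun j => rfl
  simp only [h2, single_sum i (fun j => dp j g z)]
  have h3 : Dv (eP i) g z = dp i g z := rfl
  have h4 : ∀ j, Dv (eP i) (dp j g) z = dp i (dp j g) z := fun j => rfl
  simp only [h3, h4]
  ring

lemma dq_mop {g : PS n → ℂ} (hg : Sm g) (i : Fin n) (z : PS n) :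
    dq i (mop g) z = dq i g z - ∑ j, (z.2 j : ℂ) * dq i (dp j g) z := by
  rw [dq_eq, Dv_mop hg]
  rw [Finset.sum_add_distrib]
  have h2 : ∀ j, (((eQ i).2 j : ℝ) : ℂ) = 0 := fun j => by
    show (((0 : Fin n → ℝ) j : ℝ) : ℂ) = 0; simp
  simp only [h2, zero_mul, Finset.sum_const_zero, zero_add]
  have h3 : Dv (eQ i) g z = dq i g z := rfl
  have h4 : ∀ j, Dv (eQ i) (dp j g) z = dq i (dp j g) z := fun j => rfl
  simp only [h3, h4]

lemma dp_pb {g u : PS n → ℂ} (hg : Sm g) (hu : Sm u) (j : Fin n) (z : PS n) :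
    dp j (pb g u) z = ∑ i, (dp j (dq i g) z * dp i u z + dq i g z * dp j (dp i u) z
      - (dp j (dp i g) z * dq i u z + dp i g z * dp j (dq i u) z)) := by
  rw [dp_eq, Dv_pb hg hu]; rfl

lemma dq_pb {g u : PS n → ℂ} (hg : Sm g) (hu : Sm u) (j : Fin n) (z : PS n) :
    dq j (pb g u) z = ∑ i, (dq j (dq i g) z * dp i u z + dq i g z * dq j (dp i u) z
      - (dq j (dp i g) z * dq i u z + dp i g z * dq j (dq i u) z)) := by
  rw [dq_eq, Dv_pb hg hu]; rfl

lemma sum_comb (a b : ℂ) (w X Y : Fin n → ℂ) :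
    ∑ j, w j * (a * X j - b * Y j) = a * ∑ j, w j * X j - b * ∑ j, w j * Y j := by
  rw [Finset.mul_sum, Finset.mul_sum, ← Finset.sum_sub_distrib]
  exact Finset.sum_congr rfl fun j _ => by ring

lemma euler {f g : PS n → ℂ} (hf : Sm f) (hg : Sm g) (z : PS n) :
    pb f (mop g) z - pb g (mop f) z = mop (pb f g) z := by
  have hfmg : pb f (mop g) z = ∑ i, (-(dp i f z * dq i g z))
      + ∑ i, ∑ j, (z.2 j : ℂ) *
        (dp i f z * dq i (dp j g) z - dq i f z * dp i (dp j g) z) := by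
    rw [← Finset.sum_add_distrib]
    show (∑ i, (dq i f z * dp i (mop g) z - dp i f z * dq i (mop g) z)) = _
    refine Finset.sum_congr rfl fun i _ => ?_
    rw [dp_mop hg i z, dq_mop hg i z,
      sum_comb (dp i f z) (dq i f z) (fun j => (z.2 j : ℂ))
        (fun j => dq i (dp j g) z) (fun j => dp i (dp j g) z)]
    ring
  have hgmf : pb g (mop f) z = ∑ i, (-(dp i g z * dq i f z))
      + ∑ i, ∑ j, (z.2 j : ℂ) *
        (dp i g z * dq i (dp j f) z - dq i g z * dp i (dp j f) z) := by
    rw [← Finset.sum_add_distrib]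
    show (∑ i, (dq i g z * dp i (mop f) z - dp i g z * dq i (mop f) z)) = _
    refine Finset.sum_congr rfl fun i _ => ?_
    rw [dp_mop hf i z, dq_mop hf i z,
      sum_comb (dp i g z) (dq i g z) (fun j => (z.2 j : ℂ))
        (fun j => dq i (dp j f) z) (fun j => dp i (dp j f) z)]
    ring
  have hD3 : ∑ j, (z.2 j : ℂ) * dp j (pb f g) z = ∑ i, ∑ j, (z.2 j : ℂ) *
      (dp j (dq i f) z * dp i g z + dq i f z * dp j (dp i g) z
        - (dp j (dp i f) z * dq i g z + dp i f z * dp j (dq i g) z)) := by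
    have : ∀ j, (z.2 j : ℂ) * dp j (pb f g) z = ∑ i, (z.2 j : ℂ) *
        (dp j (dq i f) z * dp i g z + dq i f z * dp j (dp i g) z
          - (dp j (dp i f) z * dq i g z + dp i f z * dp j (dq i g) z)) := by
      intro j; rw [dp_pb hf hg j z, Finset.mul_sum]
    rw [Finset.sum_congr rfl fun j _ => this j, Finset.sum_comm]
  have hmop : mop (pb f g) z = pb f g z - ∑ j, (z.2 j : ℂ) * dp j (pb f g) z := rfl
  have h1 : pb f g z = ∑ i, (-(dp i f z * dq i g z)) - ∑ i, (-(dp i g z * dq i f z)) := by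
    rw [← Finset.sum_sub_distrib]
    show (∑ i, (dq i f z * dp i g z - dp i f z * dq i g z)) = _
    exact Finset.sum_congr rfl fun i _ => by ring
  have h2 : (∑ i, ∑ j, (z.2 j : ℂ) *
        (dp i f z * dq i (dp j g) z - dq i f z * dp i (dp j g) z))
      - (∑ i, ∑ j, (z.2 j : ℂ) *
        (dp i g z * dq i (dp j f) z - dq i g z * dp i (dp j f) z))
      + (∑ i, ∑ j, (z.2 j : ℂ) *
        (dp j (dq i f) z * dp i g z + dq i f z * dp j (dp i g) z
          - (dp j (dp i f) z * dq i g z + dp i f z * dp j (dq i g) z))) = 0 := by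
    rw [← Finset.sum_sub_distrib, ← Finset.sum_add_distrib]
    refine Finset.sum_eq_zero fun i _ => ?_
    rw [← Finset.sum_sub_distrib, ← Finset.sum_add_distrib]
    refine Finset.sum_eq_zero fun j _ => ?_
    rw [cl_qp hg i j z, cl_pp hg i j z, cl_qp hf i j z, cl_pp hf i j z]
    ring
  rw [hmop, hfmg, hgmf, hD3]
  linear_combination h2 - h1

lemma sum_antisym {m : ℕ} {S : Fin m → Fin m → ℂ} (h : ∀ i j, S i j = -S j i) :
    ∑ i, ∑ j, S i j = 0 := by
  have h2 : ∑ i, ∑ j, S i j = -∑ i, ∑ j, S i j := by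
    conv_lhs => rw [Finset.sum_comm]
    calc ∑ j, ∑ i, S i j = ∑ j, ∑ i, -S j i := by
          exact Finset.sum_congr rfl fun j _ => Finset.sum_congr rfl fun i _ => h i j
      _ = -∑ j, ∑ i, S j i := by simp [Finset.sum_neg_distrib]
  linear_combination h2 / 2

lemma jacobi {f g ψ : PS n → ℂ} (hf : Sm f) (hg : Sm g) (hψ : Sm ψ) (z : PS n) :
    pb f (pb g ψ) z - pb g (pb f ψ) z = pb (pb f g) ψ z := by
  have hA : pb f (pb g ψ) z = ∑ j, ∑ i,
      (dq j f z * (dp j (dq i g) z * dp i ψ z + dq i g z * dp j (dp i ψ) z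
          - (dp j (dp i g) z * dq i ψ z + dp i g z * dp j (dq i ψ) z))
        - dp j f z * (dq j (dq i g) z * dp i ψ z + dq i g z * dq j (dp i ψ) z
          - (dq j (dp i g) z * dq i ψ z + dp i g z * dq j (dq i ψ) z))) := by
    show (∑ j, (dq j f z * dp j (pb g ψ) z - dp j f z * dq j (pb g ψ) z)) = _
    refine Finset.sum_congr rfl fun j _ => ?_
    rw [dp_pb hg hψ j z, dq_pb hg hψ j z, Finset.mul_sum, Finset.mul_sum,
      ← Finset.sum_sub_distrib]
  have hB : pb g (pb f ψ) z = ∑ j, ∑ i,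
      (dq j g z * (dp j (dq i f) z * dp i ψ z + dq i f z * dp j (dp i ψ) z
          - (dp j (dp i f) z * dq i ψ z + dp i f z * dp j (dq i ψ) z))
        - dp j g z * (dq j (dq i f) z * dp i ψ z + dq i f z * dq j (dp i ψ) z
          - (dq j (dp i f) z * dq i ψ z + dp i f z * dq j (dq i ψ) z))) := by
    show (∑ j, (dq j g z * dp j (pb f ψ) z - dp j g z * dq j (pb f ψ) z)) = _
    refine Finset.sum_congr rfl fun j _ => ?_
    rw [dp_pb hf hψ j z, dq_pb hf hψ j z, Finset.mul_sum, Finset.mul_sum,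
      ← Finset.sum_sub_distrib]
  have hC : pb (pb f g) ψ z = ∑ j, ∑ i,
      ((dq i (dq j f) z * dp j g z + dq j f z * dq i (dp j g) z
          - (dq i (dp j f) z * dq j g z + dp j f z * dq i (dq j g) z)) * dp i ψ z
        - (dp i (dq j f) z * dp j g z + dq j f z * dp i (dp j g) z
          - (dp i (dp j f) z * dq j g z + dp j f z * dp i (dq j g) z)) * dq i ψ z) := by
    rw [Finset.sum_comm]
    show (∑ i, (dq i (pb f g) z * dp i ψ z - dp i (pb f g) z * dq i ψ z)) = _
    refine Finset.sum_congr rfl fun i _ => ?_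
    rw [dq_pb hf hg i z, dp_pb hf hg i z, Finset.sum_mul, Finset.sum_mul,
      ← Finset.sum_sub_distrib]
  have key : ∀ (X Y Z W : Fin n → Fin n → ℂ), (∀ j i, X j i - Y j i - Z j i = W j i) →
      (∀ j i, W j i = - W i j) →
      ∑ j, ∑ i, X j i - ∑ j, ∑ i, Y j i - ∑ j, ∑ i, Z j i = 0 := by
    intro X Y Z W h1 h2
    have : ∑ j, ∑ i, X j i - ∑ j, ∑ i, Y j i - ∑ j, ∑ i, Z j i
        = ∑ j, ∑ i, (X j i - Y j i - Z j i) := by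
      rw [← Finset.sum_sub_distrib, ← Finset.sum_sub_distrib]
      refine Finset.sum_congr rfl fun j _ => ?_
      rw [← Finset.sum_sub_distrib, ← Finset.sum_sub_distrib]
    rw [this, Finset.sum_congr rfl fun j _ => Finset.sum_congr rfl fun i _ => h1 j i]
    exact sum_antisym h2
  rw [hA, hB, hC]
  have main := key
    (fun j i => (dq j f z * (dp j (dq i g) z * dp i ψ z + dq i g z * dp j (dp i ψ) z
          - (dp j (dp i g) z * dq i ψ z + dp i g z * dp j (dq i ψ) z))
        - dp j f z * (dq j (dq i g) z * dp i ψ z + dq i g z * dq j (dp i ψ) z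
          - (dq j (dp i g) z * dq i ψ z + dp i g z * dq j (dq i ψ) z))))
    (fun j i => (dq j g z * (dp j (dq i f) z * dp i ψ z + dq i f z * dp j (dp i ψ) z
          - (dp j (dp i f) z * dq i ψ z + dp i f z * dp j (dq i ψ) z))
        - dp j g z * (dq j (dq i f) z * dp i ψ z + dq i f z * dq j (dp i ψ) z
          - (dq j (dp i f) z * dq i ψ z + dp i f z * dq j (dq i ψ) z))))
    (fun j i => ((dq i (dq j f) z * dp j g z + dq j f z * dq i (dp j g) z
          - (dq i (dp j f) z * dq j g z + dp j f z * dq i (dq j g) z)) * dp i ψ z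
        - (dp i (dq j f) z * dp j g z + dq j f z * dp i (dp j g) z
          - (dp i (dp j f) z * dq j g z + dp j f z * dp i (dq j g) z)) * dq i ψ z))
    (fun j i => dq j f z * dq i g z * dp j (dp i ψ) z
      - dq j f z * dp i g z * dp j (dq i ψ) z
      - dp j f z * dq i g z * dq j (dp i ψ) z
      + dp j f z * dp i g z * dq j (dq i ψ) z
      - dq j g z * dq i f z * dp j (dp i ψ) z
      + dq j g z * dp i f z * dp j (dq i ψ) z
      + dp j g z * dq i f z * dq j (dp i ψ) z
      - dp j g z * dp i f z * dq j (dq i ψ) z)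
    (fun j i => by
      beta_reduce
      rw [cl_qq hg i j z, cl_qp hg i j z, cl_pp hg i j z, cl_pq hg i j z,
        cl_qq hf i j z, cl_qp hf i j z, cl_pp hf i j z, cl_pq hf i j z]
      ring)
    (fun j i => by
      beta_reduce
      rw [cl_pp hψ i j z, cl_pq hψ i j z, cl_qp hψ i j z, cl_qq hψ i j z]
      ring)
  linear_combination main

lemma pb_lin (f : PS n → ℂ) {X Y : PS n → ℂ} (hX : Sm X) (hY : Sm Y) (c : ℂ) (z : PS n) :
    pb f (fun w => c * X w + Y w) z = c * pb f X z + pb f Y z := by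
  have hd : ∀ v : PS n, Dv v (fun w => c * X w + Y w) z = c * Dv v X z + Dv v Y z := by
    intro v
    rw [Dv_add v z ((contDiff_const.mul hX).differentiable (by norm_cast) z) (dat hY z),
      Dv_const_mul v z c (dat hX z)]
  have hdq : ∀ i, dq i (fun w => c * X w + Y w) z = c * dq i X z + dq i Y z := fun i => hd _
  have hdp : ∀ i, dp i (fun w => c * X w + Y w) z = c * dp i X z + dp i Y z := fun i => hd _
  show (∑ i, (dq i f z * dp i (fun w => c * X w + Y w) z
      - dp i f z * dq i (fun w => c * X w + Y w) z)) = _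
  rw [show c * pb f X z + pb f Y z = c * (∑ i, (dq i f z * dp i X z - dp i f z * dq i X z))
      + (∑ i, (dq i f z * dp i Y z - dp i f z * dq i Y z)) from rfl,
    Finset.mul_sum, ← Finset.sum_add_distrib]
  exact Finset.sum_congr rfl fun i _ => by rw [hdq i, hdp i]; ring

lemma pb_leibniz (f : PS n → ℂ) {u s : PS n → ℂ} (hu : Sm u) (hs : Sm s) (z : PS n) :
    pb f (fun w => u w * s w) z = pb f u z * s z + u z * pb f s z := by
  have hd : ∀ v : PS n, Dv v (fun w => u w * s w) z = Dv v u z * s z + u z * Dv v s z :=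
    fun v => Dv_mul v z (dat hu z) (dat hs z)
  show (∑ i, (dq i f z * dp i (fun w => u w * s w) z
      - dp i f z * dq i (fun w => u w * s w) z)) = _
  rw [show pb f u z * s z + u z * pb f s z
      = (∑ i, (dq i f z * dp i u z - dp i f z * dq i u z)) * s z
        + u z * (∑ i, (dq i f z * dp i s z - dp i f z * dq i s z)) from rfl,
    Finset.sum_mul, Finset.mul_sum, ← Finset.sum_add_distrib]
  exact Finset.sum_congr rfl fun i _ => by
    rw [show dp i (fun w => u w * s w) z = Dv (eP i) (fun w => u w * s w) z from rfl,
      show dq i (fun w => u w * s w) z = Dv (eQ i) (fun w => u w * s w) z from rfl,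
      hd (eP i), hd (eQ i)]
    show dq i f z * (dp i u z * s z + u z * dp i s z)
      - dp i f z * (dq i u z * s z + u z * dq i s z) = _
    ring

lemma key_scalar {ℏ : ℝ} {f g ψ : PS n → ℂ} (hf : Sm f) (hg : Sm g) (hψ : Sm ψ) (z : PS n) :
    lop ℏ f (lop ℏ g ψ) z - lop ℏ g (lop ℏ f ψ) z = Complex.I * ℏ * lop ℏ (pb f g) ψ z := by
  have expand : ∀ (F G : PS n → ℂ), Sm F → Sm G →
      lop ℏ F (lop ℏ G ψ) z = Complex.I * ℏ * (Complex.I * ℏ * pb F (pb G ψ) z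
        + (pb F (mop G) z * ψ z + mop G z * pb F ψ z))
      + mop F z * (Complex.I * ℏ * pb G ψ z + mop G z * ψ z) := by
    intro F G hF hG
    have h1 : lop ℏ F (lop ℏ G ψ) z
        = Complex.I * ℏ * pb F (lop ℏ G ψ) z + mop F z * lop ℏ G ψ z := rfl
    have h2 : lop ℏ G ψ = fun w => Complex.I * ℏ * pb G ψ w + mop G w * ψ w := rfl
    have h3 : pb F (lop ℏ G ψ) z = Complex.I * ℏ * pb F (pb G ψ) z
        + (pb F (mop G) z * ψ z + mop G z * pb F ψ z) := by
      rw [h2, pb_lin F (sm_pb hG hψ) ((sm_mop hG).mul hψ) _ z,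
        pb_leibniz F (sm_mop hG) hψ z]
    rw [h1, h3]
    rfl
  have hrhs : Complex.I * ℏ * lop ℏ (pb f g) ψ z
      = Complex.I * ℏ * (Complex.I * ℏ * pb (pb f g) ψ z + mop (pb f g) z * ψ z) := rfl
  rw [expand f g hf hg, expand g f hg hf, hrhs]
  have hj := jacobi hf hg hψ z
  have he := euler hf hg z
  linear_combination (Complex.I * ℏ * Complex.I * ℏ) * hj + (Complex.I * ℏ * ψ z) * he

lemma pb_antisym (F G : PS n → ℂ) (z : PS n) : pb F G z = -pb G F z := by
  show (∑ i, (dq i F z * dp i G z - dp i F z * dq i G z))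
    = -∑ i, (dq i G z * dp i F z - dp i G z * dq i F z)
  rw [← Finset.sum_neg_distrib]
  exact Finset.sum_congr rfl fun i _ => by ring

lemma pb_add_left {X Y : PS n → ℂ} (hX : Sm X) (hY : Sm Y) (u : PS n → ℂ) (z : PS n) :
    pb (fun w => X w + Y w) u z = pb X u z + pb Y u z := by
  have hd : ∀ v : PS n, Dv v (fun w => X w + Y w) z = Dv v X z + Dv v Y z :=
    fun v => Dv_add v z (dat hX z) (dat hY z)
  show (∑ i, (dq i (fun w => X w + Y w) z * dp i u z
      - dp i (fun w => X w + Y w) z * dq i u z)) = _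
  rw [show pb X u z + pb Y u z = (∑ i, (dq i X z * dp i u z - dp i X z * dq i u z))
      + (∑ i, (dq i Y z * dp i u z - dp i Y z * dq i u z)) from rfl,
    ← Finset.sum_add_distrib]
  exact Finset.sum_congr rfl fun i _ => by
    rw [show dq i (fun w => X w + Y w) z = Dv (eQ i) (fun w => X w + Y w) z from rfl,
      show dp i (fun w => X w + Y w) z = Dv (eP i) (fun w => X w + Y w) z from rfl,
      hd (eQ i), hd (eP i)]
    show (dq i X z + dq i Y z) * dp i u z - (dp i X z + dp i Y z) * dq i u z = _
    ring

lemma pb_sum_left {F : Fin k → PS n → ℂ} (hF : ∀ c, Sm (F c)) (u : PS n → ℂ) (z : PS n) :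
    pb (fun w => ∑ c, F c w) u z = ∑ c, pb (F c) u z := by
  have hd : ∀ v : PS n, Dv v (fun w => ∑ c, F c w) z = ∑ c, Dv v (F c) z :=
    fun v => Dv_sum v z (fun c => dat (hF c) z)
  have h2 : (∑ c, pb (F c) u z)
      = ∑ i, ∑ c, (dq i (F c) z * dp i u z - dp i (F c) z * dq i u z) := Finset.sum_comm
  rw [h2]
  show (∑ i, (dq i (fun w => ∑ c, F c w) z * dp i u z
      - dp i (fun w => ∑ c, F c w) z * dq i u z)) = _
  refine Finset.sum_congr rfl fun i _ => ?_
  rw [show dq i (fun w => ∑ c, F c w) z = Dv (eQ i) (fun w => ∑ c, F c w) z from rfl,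
    show dp i (fun w => ∑ c, F c w) z = Dv (eP i) (fun w => ∑ c, F c w) z from rfl,
    hd (eQ i), hd (eP i)]
  show (∑ c, dq i (F c) z) * dp i u z - (∑ c, dp i (F c) z) * dq i u z = _
  rw [Finset.sum_mul, Finset.sum_mul, ← Finset.sum_sub_distrib]

lemma mop_add {X Y : PS n → ℂ} (hX : Sm X) (hY : Sm Y) (z : PS n) :
    mop (fun w => X w + Y w) z = mop X z + mop Y z := by
  have hd : ∀ i, dp i (fun w => X w + Y w) z = dp i X z + dp i Y z :=
    fun i => Dv_add (eP i) z (dat hX z) (dat hY z)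
  have h1 : (∑ i, (z.2 i : ℂ) * dp i (fun w => X w + Y w) z)
      = ∑ i, (z.2 i : ℂ) * dp i X z + ∑ i, (z.2 i : ℂ) * dp i Y z := by
    rw [← Finset.sum_add_distrib]
    exact Finset.sum_congr rfl fun i _ => by rw [hd i]; ring
  show X z + Y z - ∑ i, (z.2 i : ℂ) * dp i (fun w => X w + Y w) z = _
  rw [h1]
  show _ = X z - ∑ i, (z.2 i : ℂ) * dp i X z + (Y z - ∑ i, (z.2 i : ℂ) * dp i Y z)
  ring

lemma mop_sum {F : Fin k → PS n → ℂ} (hF : ∀ c, Sm (F c)) (z : PS n) :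
    mop (fun w => ∑ c, F c w) z = ∑ c, mop (F c) z := by
  have hd : ∀ i, dp i (fun w => ∑ c, F c w) z = ∑ c, dp i (F c) z :=
    fun i => Dv_sum (eP i) z (fun c => dat (hF c) z)
  have h1 : (∑ i, (z.2 i : ℂ) * dp i (fun w => ∑ c, F c w) z)
      = ∑ c, ∑ i, (z.2 i : ℂ) * dp i (F c) z := by
    rw [Finset.sum_comm]
    exact Finset.sum_congr rfl fun i _ => by rw [hd i, Finset.mul_sum]
  show (∑ c, F c z) - ∑ i, (z.2 i : ℂ) * dp i (fun w => ∑ c, F c w) z = _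
  rw [h1, ← Finset.sum_sub_distrib]
  rfl

lemma lop_add {ℏ : ℝ} {X Y : PS n → ℂ} (hX : Sm X) (hY : Sm Y) (u : PS n → ℂ) (z : PS n) :
    lop ℏ (fun w => X w + Y w) u z = lop ℏ X u z + lop ℏ Y u z := by
  show Complex.I * ℏ * pb (fun w => X w + Y w) u z + mop (fun w => X w + Y w) z * u z = _
  rw [pb_add_left hX hY u z, mop_add hX hY z]
  show _ = Complex.I * ℏ * pb X u z + mop X z * u z
    + (Complex.I * ℏ * pb Y u z + mop Y z * u z)
  ring

lemma lop_sum {ℏ : ℝ} {F : Fin k → PS n → ℂ} (hF : ∀ c, Sm (F c)) (u : PS n → ℂ) (z : PS n) :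
    lop ℏ (fun w => ∑ c, F c w) u z = ∑ c, lop ℏ (F c) u z := by
  show Complex.I * ℏ * pb (fun w => ∑ c, F c w) u z + mop (fun w => ∑ c, F c w) z * u z = _
  rw [pb_sum_left hF u z, mop_sum hF z, Finset.mul_sum, Finset.sum_mul,
    ← Finset.sum_add_distrib]
  rfl

lemma dq_zero (i : Fin n) (z : PS n) : dq i (fun _ : PS n => (0 : ℂ)) z = 0 := by
  rw [dq_eq]; exact Dv_const _ _ 0
lemma dp_zero (i : Fin n) (z : PS n) : dp i (fun _ : PS n => (0 : ℂ)) z = 0 := by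
  rw [dp_eq]; exact Dv_const _ _ 0

lemma sm_comp {A : PS n → Fin k → Fin k → ℂ} (hA : ContDiff ℝ (⊤ : ℕ∞) A) (a b : Fin k) :
    Sm (fun w => A w a b) := contDiff_pi.mp (contDiff_pi.mp hA a) b

lemma single_comp {k : ℕ} (ψ : PS n → ℂ) (b c : Fin k) :
    (fun w => Pi.single (M := fun _ : Fin k => ℂ) b (ψ w) c)
      = if c = b then ψ else (fun _ => 0) := by
  by_cases h : c = b <;> funext w <;> simp [Pi.single_apply, h]

lemma LHyb_single {ℏ : ℝ} (A : PS n → Fin k → Fin k → ℂ) (ψ : PS n → ℂ)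
    (z : PS n) (a b : Fin k) :
    LHyb ℏ A (fun w' => Pi.single b (ψ w')) z a = lop ℏ (fun w => A w a b) ψ z := by
  show Complex.I * ℏ * ∑ i, ∑ c, (dq i (fun w => A w a c) z
        * dp i (fun w => Pi.single (M := fun _ : Fin k => ℂ) b (ψ w) c) z
      - dp i (fun w => A w a c) z
        * dq i (fun w => Pi.single (M := fun _ : Fin k => ℂ) b (ψ w) c) z)
    + ∑ c, (A z a c - ∑ i, (z.2 i : ℂ) * dp i (fun w => A w a c) z)
        * Pi.single (M := fun _ : Fin k => ℂ) b (ψ z) c = _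
  have h1 : ∀ i : Fin n, (∑ c, (dq i (fun w => A w a c) z
        * dp i (fun w => Pi.single (M := fun _ : Fin k => ℂ) b (ψ w) c) z
      - dp i (fun w => A w a c) z
        * dq i (fun w => Pi.single (M := fun _ : Fin k => ℂ) b (ψ w) c) z))
      = dq i (fun w => A w a b) z * dp i ψ z - dp i (fun w => A w a b) z * dq i ψ z := by
    intro i
    rw [Finset.sum_eq_single b]
    · rw [single_comp ψ b b, if_pos rfl]
    · intro c _ hc
      rw [single_comp ψ b c, if_neg hc, dq_zero, dp_zero]
      ring
    · intro h; exact absurd (Finset.mem_univ b) h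
  have h2 : (∑ c, (A z a c - ∑ i, (z.2 i : ℂ) * dp i (fun w => A w a c) z)
        * Pi.single (M := fun _ : Fin k => ℂ) b (ψ z) c)
      = (A z a b - ∑ i, (z.2 i : ℂ) * dp i (fun w => A w a b) z) * ψ z := by
    rw [Finset.sum_eq_single b]
    · rw [Pi.single_eq_same]
    · intro c _ hc; rw [Pi.single_eq_of_ne hc]; ring
    · intro h; exact absurd (Finset.mem_univ b) h
  rw [Finset.sum_congr rfl fun i _ => h1 i, h2]
  rfl

lemma LHyb_lop {ℏ : ℝ} (A : PS n → Fin k → Fin k → ℂ) (Υ : PS n → Fin k → ℂ)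
    (z : PS n) (a : Fin k) :
    LHyb ℏ A Υ z a = ∑ c, lop ℏ (fun w => A w a c) (fun w => Υ w c) z := by
  show Complex.I * ℏ * ∑ i, ∑ c, (dq i (fun w => A w a c) z * dp i (fun w => Υ w c) z
      - dp i (fun w => A w a c) z * dq i (fun w => Υ w c) z)
    + ∑ c, (A z a c - ∑ i, (z.2 i : ℂ) * dp i (fun w => A w a c) z) * Υ z c = _
  rw [Finset.sum_comm, Finset.mul_sum, ← Finset.sum_add_distrib]
  rfl


/-- Remarkable algebraic relation for hybrid Liouvillians
(componentwise form):
`([L̂_Â,L̂_B̂](ψ e_b))_a + ([L̂_Ā,L̂_B̄](ψ e_a))_b = iℏ (L̂_{{Â,B̂}−{B̂,Â}}(ψ e_b))_a`. -/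
theorem hybrid_liouvillian_remarkable_relation (n k : ℕ) (ℏ : ℝ) (hℏ : 0 < ℏ)
    (A B : PS n → Fin k → Fin k → ℂ)
    (hA : ContDiff ℝ (⊤ : ℕ∞) A) (hB : ContDiff ℝ (⊤ : ℕ∞) B)
    (hAherm : ∀ z a b, A z a b = (starRingEnd ℂ) (A z b a))
    (hBherm : ∀ z a b, B z a b = (starRingEnd ℂ) (B z b a))
    (ψ : PS n → ℂ) (hψ : ContDiff ℝ (⊤ : ℕ∞) ψ) :
    ∀ (z : PS n) (a b : Fin k),
      (LHyb ℏ A (fun w => LHyb ℏ B (fun w' => Pi.single b (ψ w')) w) z a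
          - LHyb ℏ B (fun w => LHyb ℏ A (fun w' => Pi.single b (ψ w')) w) z a)
        + (LHyb ℏ (fun w a' b' => (starRingEnd ℂ) (A w a' b'))
              (fun w => LHyb ℏ (fun w' a' b' => (starRingEnd ℂ) (B w' a' b'))
                (fun w' => Pi.single a (ψ w')) w) z b
            - LHyb ℏ (fun w a' b' => (starRingEnd ℂ) (B w a' b'))
              (fun w => LHyb ℏ (fun w' a' b' => (starRingEnd ℂ) (A w' a' b'))
                (fun w' => Pi.single a (ψ w')) w) z b)
        = Complex.I * ℏ *
            LHyb ℏ (fun w a' b' => mpb A B w a' b' - mpb B A w a' b')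
              (fun w' => Pi.single b (ψ w')) z a := by
  intro z a b
  have hAt : (fun (w : PS n) (a' b' : Fin k) => (starRingEnd ℂ) (A w a' b'))
      = fun w a' b' => A w b' a' := by
    funext w a' b'; rw [hAherm w b' a']
  have hBt : (fun (w : PS n) (a' b' : Fin k) => (starRingEnd ℂ) (B w a' b'))
      = fun w a' b' => B w b' a' := by
    funext w a' b'; rw [hBherm w b' a']
  rw [hAt, hBt]
  have sA : ∀ a' b' : Fin k, Sm (fun w => A w a' b') := fun a' b' => sm_comp hA a' b'
  have sB : ∀ a' b' : Fin k, Sm (fun w => B w a' b') := fun a' b' => sm_comp hB a' b'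
  have hinB : ∀ c : Fin k, (fun w => LHyb ℏ B (fun w' => Pi.single b (ψ w')) w c)
      = lop ℏ (fun w => B w c b) ψ := fun c => funext fun w => LHyb_single B ψ w c b
  have hinA : ∀ c : Fin k, (fun w => LHyb ℏ A (fun w' => Pi.single b (ψ w')) w c)
      = lop ℏ (fun w => A w c b) ψ := fun c => funext fun w => LHyb_single A ψ w c b
  have hinBt : ∀ c : Fin k, (fun w => LHyb ℏ (fun w a' b' => B w b' a')
        (fun w' => Pi.single a (ψ w')) w c)
      = lop ℏ (fun w => B w a c) ψ := fun c => funext fun w => LHyb_single _ ψ w c a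
  have hinAt : ∀ c : Fin k, (fun w => LHyb ℏ (fun w a' b' => A w b' a')
        (fun w' => Pi.single a (ψ w')) w c)
      = lop ℏ (fun w => A w a c) ψ := fun c => funext fun w => LHyb_single _ ψ w c a
  have e1 : LHyb ℏ A (fun w => LHyb ℏ B (fun w' => Pi.single b (ψ w')) w) z a
      = ∑ c, lop ℏ (fun w => A w a c) (lop ℏ (fun w => B w c b) ψ) z := by
    rw [LHyb_lop]
    refine Finset.sum_congr rfl fun c _ => ?_
    show lop ℏ (fun w => A w a c)
      (fun w => LHyb ℏ B (fun w' => Pi.single b (ψ w')) w c) z = _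
    rw [hinB c]
  have e2 : LHyb ℏ B (fun w => LHyb ℏ A (fun w' => Pi.single b (ψ w')) w) z a
      = ∑ c, lop ℏ (fun w => B w a c) (lop ℏ (fun w => A w c b) ψ) z := by
    rw [LHyb_lop]
    refine Finset.sum_congr rfl fun c _ => ?_
    show lop ℏ (fun w => B w a c)
      (fun w => LHyb ℏ A (fun w' => Pi.single b (ψ w')) w c) z = _
    rw [hinA c]
  have e3 : LHyb ℏ (fun w a' b' => A w b' a')
        (fun w => LHyb ℏ (fun w a' b' => B w b' a') (fun w' => Pi.single a (ψ w')) w) z b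
      = ∑ c, lop ℏ (fun w => A w c b) (lop ℏ (fun w => B w a c) ψ) z := by
    rw [LHyb_lop]
    refine Finset.sum_congr rfl fun c _ => ?_
    show lop ℏ (fun w => A w c b)
      (fun w => LHyb ℏ (fun w a' b' => B w b' a') (fun w' => Pi.single a (ψ w')) w c) z = _
    rw [hinBt c]
  have e4 : LHyb ℏ (fun w a' b' => B w b' a')
        (fun w => LHyb ℏ (fun w a' b' => A w b' a') (fun w' => Pi.single a (ψ w')) w) z b
      = ∑ c, lop ℏ (fun w => B w c b) (lop ℏ (fun w => A w a c) ψ) z := by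
    rw [LHyb_lop]
    refine Finset.sum_congr rfl fun c _ => ?_
    show lop ℏ (fun w => B w c b)
      (fun w => LHyb ℏ (fun w a' b' => A w b' a') (fun w' => Pi.single a (ψ w')) w c) z = _
    rw [hinAt c]
  have e5 : LHyb ℏ (fun w a' b' => mpb A B w a' b' - mpb B A w a' b')
        (fun w' => Pi.single b (ψ w')) z a
      = lop ℏ (fun w => mpb A B w a b - mpb B A w a b) ψ z := LHyb_single _ ψ z a b
  have hCfun : (fun w => mpb A B w a b - mpb B A w a b)
      = fun w => ∑ c, (pb (fun w' => A w' a c) (fun w' => B w' c b) w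
          + pb (fun w' => A w' c b) (fun w' => B w' a c) w) := by
    funext w
    have h1 : mpb A B w a b = ∑ c, pb (fun w' => A w' a c) (fun w' => B w' c b) w :=
      Finset.sum_comm
    have h2 : mpb B A w a b = ∑ c, pb (fun w' => B w' a c) (fun w' => A w' c b) w :=
      Finset.sum_comm
    rw [h1, h2, ← Finset.sum_sub_distrib]
    refine Finset.sum_congr rfl fun c _ => ?_
    rw [pb_antisym (fun w' => B w' a c) (fun w' => A w' c b) w]
    ring
  have hFc : ∀ c : Fin k, Sm (fun w => pb (fun w' => A w' a c) (fun w' => B w' c b) w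
      + pb (fun w' => A w' c b) (fun w' => B w' a c) w) :=
    fun c => ContDiff.add (sm_pb (sA a c) (sB c b)) (sm_pb (sA c b) (sB a c))
  have e6 : lop ℏ (fun w => mpb A B w a b - mpb B A w a b) ψ z
      = ∑ c, (lop ℏ (pb (fun w' => A w' a c) (fun w' => B w' c b)) ψ z
          + lop ℏ (pb (fun w' => A w' c b) (fun w' => B w' a c)) ψ z) := by
    rw [hCfun, lop_sum hFc ψ z]
    exact Finset.sum_congr rfl fun c _ =>
      lop_add (sm_pb (sA a c) (sB c b)) (sm_pb (sA c b) (sB a c)) ψ z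
  rw [e1, e2, e3, e4, e5, e6, Finset.mul_sum,
    ← Finset.sum_sub_distrib, ← Finset.sum_sub_distrib, ← Finset.sum_add_distrib]
  refine Finset.sum_congr rfl fun c _ => ?_
  have k1 := key_scalar (ℏ := ℏ) (sA a c) (sB c b) hψ z
  have k2 := key_scalar (ℏ := ℏ) (sA c b) (sB a c) hψ z
  linear_combination k1 + k2
end
end
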